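/- arXiv:2307.05640 — 3 statements merged into one kernel-verified Lean document; each statement's English description precedes it below -/
import Mathlib

section
/- Let L be a lattice of ℝ^k. Then there exists a sublattice L' of L (a finite-index subgroup of L which is again a lattice of ℝ^k) such that λ(L') = λ(L) and λ(L') ≤ 2·τ(L'). -/
open Metric Set

noncomputable section

/-- A lattice of `ℝ^k`: the additive subgroup generated (over `ℤ`) by a basis of `ℝ^k`. -/
def IsLattice (k : ℕ) (L : AddSubgroup (EuclideanSpace ℝ (Fin k))) : Prop :=
  ∃ b : Module.Basis (Fin k) ℝ (EuclideanSpace ℝ (Fin k)),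
    L = AddSubgroup.closure (Set.range b)

/-- The shortest vector `τ(L)` of a lattice. -/
def shortestVector {k : ℕ} (L : AddSubgroup (EuclideanSpace ℝ (Fin k))) : ℝ :=
  sInf {r : ℝ | ∃ v ∈ L, v ≠ 0 ∧ r = ‖v‖}

/-- The shortest generating radius `λ(L)` of a lattice: the least `r` such that `L` contains
`k` linearly independent vectors of length at most `r`. -/
def shortestGenRadius {k : ℕ} (L : AddSubgroup (EuclideanSpace ℝ (Fin k))) : ℝ :=
  sInf {r : ℝ | ∃ v : Fin k → EuclideanSpace ℝ (Fin k),
    LinearIndependent ℝ v ∧ (∀ i, v i ∈ L) ∧ ∀ i, ‖v i‖ ≤ r}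

private lemma finite_lattice_inter {k : ℕ} (b : Module.Basis (Fin k) ℝ (EuclideanSpace ℝ (Fin k)))
    (r : ℝ) :
    (((Submodule.span ℤ (Set.range ⇑b)) : Set (EuclideanSpace ℝ (Fin k)))
      ∩ Metric.closedBall 0 r).Finite := by
  have hcl : IsClosed ((Submodule.span ℤ (Set.range ⇑b)) : Set (EuclideanSpace ℝ (Fin k))) := by
    have hd : DiscreteTopology ((Submodule.span ℤ (Set.range ⇑b)).toAddSubgroup) := by
      infer_instance
    exact AddSubgroup.isClosed_of_discrete (H := (Submodule.span ℤ (Set.range ⇑b)).toAddSubgroup)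
  have hcpt : IsCompact (((Submodule.span ℤ (Set.range ⇑b)) : Set (EuclideanSpace ℝ (Fin k)))
      ∩ Metric.closedBall 0 r) :=
    (isCompact_closedBall 0 r).inter_left hcl
  refine hcpt.finite ?_
  have hd : DiscreteTopology (Submodule.span ℤ (Set.range ⇑b)) := inferInstance
  exact isDiscrete_iff_discreteTopology.2 (DiscreteTopology.of_subset hd inter_subset_left)

private lemma genRadius_isLeast {k : ℕ} (hk : k ≠ 0)
    (b : Module.Basis (Fin k) ℝ (EuclideanSpace ℝ (Fin k)))
    (L : AddSubgroup (EuclideanSpace ℝ (Fin k)))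
    (hA : ∀ r : ℝ, ((L : Set (EuclideanSpace ℝ (Fin k))) ∩ Metric.closedBall 0 r).Finite)
    (hbL : ∀ i, b i ∈ L) :
    IsLeast {r : ℝ | ∃ v : Fin k → EuclideanSpace ℝ (Fin k),
      LinearIndependent ℝ v ∧ (∀ i, v i ∈ L) ∧ ∀ i, ‖v i‖ ≤ r} (shortestGenRadius L) := by
  haveI : Nonempty (Fin k) := ⟨⟨0, Nat.pos_of_ne_zero hk⟩⟩
  set S := {r : ℝ | ∃ v : Fin k → EuclideanSpace ℝ (Fin k),
      LinearIndependent ℝ v ∧ (∀ i, v i ∈ L) ∧ ∀ i, ‖v i‖ ≤ r} with hS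
  set r0 : ℝ := ∑ i, ‖b i‖ with hr0
  have hbnorm : ∀ i, ‖b i‖ ≤ r0 := fun i =>
    Finset.single_le_sum (f := fun i => ‖b i‖) (fun i _ => norm_nonneg _) (Finset.mem_univ i)
  have hr0S : r0 ∈ S := ⟨⇑b, b.linearIndependent, hbL, hbnorm⟩
  set V := {v : Fin k → EuclideanSpace ℝ (Fin k) |
      LinearIndependent ℝ v ∧ (∀ i, v i ∈ L) ∧ ∀ i, ‖v i‖ ≤ r0} with hV
  have hVfin : V.Finite := by
    refine Set.Finite.subset (Set.Finite.pi (t := fun _ : Fin k =>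
      (L : Set (EuclideanSpace ℝ (Fin k))) ∩ Metric.closedBall 0 r0) (fun _ => hA r0)) ?_
    rintro v ⟨-, hmem, hnorm⟩ i -
    exact ⟨hmem i, by simpa using hnorm i⟩
  have hVne : (⇑b) ∈ V := ⟨b.linearIndependent, hbL, hbnorm⟩
  set f : (Fin k → EuclideanSpace ℝ (Fin k)) → ℝ :=
    fun v => Finset.univ.sup' Finset.univ_nonempty (fun i => ‖v i‖) with hf
  obtain ⟨v₀, hv₀V, hv₀min⟩ := Set.exists_min_image V f hVfin ⟨_, hVne⟩
  have hleast : IsLeast S (f v₀) := by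
    constructor
    · exact ⟨v₀, hv₀V.1, hv₀V.2.1, fun i => Finset.le_sup' (fun i => ‖v₀ i‖) (Finset.mem_univ i)⟩
    · rintro r ⟨v, hlin, hmem, hnorm⟩
      rcases le_total r r0 with h | h
      · have hvV : v ∈ V := ⟨hlin, hmem, fun i => (hnorm i).trans h⟩
        exact le_trans (hv₀min v hvV) (Finset.sup'_le _ _ fun i _ => hnorm i)
      · exact le_trans (le_trans (hv₀min _ hVne) (Finset.sup'_le _ _ fun i _ => hbnorm i)) h
  rw [shortestGenRadius, ← hS, hleast.csInf_eq]
  exact hleast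

private lemma relindex_bound {k : ℕ} (b' : Module.Basis (Fin k) ℝ (EuclideanSpace ℝ (Fin k)))
    (L : AddSubgroup (EuclideanSpace ℝ (Fin k))) (S : Set (EuclideanSpace ℝ (Fin k)))
    (hS : S.Finite) (hmem : ∀ i, b' i ∈ L)
    (hsub : (L : Set (EuclideanSpace ℝ (Fin k))) ∩ Metric.closedBall 0 (∑ i, ‖b' i‖) ⊆ S) :
    (AddSubgroup.closure (Set.range ⇑b')).relIndex L ≠ 0 ∧
    (AddSubgroup.closure (Set.range ⇑b')).relIndex L ≤ Nat.card S := by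
  set L' := AddSubgroup.closure (Set.range ⇑b') with hL'
  have hspan : (L' : Set (EuclideanSpace ℝ (Fin k)))
      = ((Submodule.span ℤ (Set.range ⇑b')) : Set (EuclideanSpace ℝ (Fin k))) := by
    rw [hL', ← Submodule.span_int_eq_addSubgroupClosure]; rfl
  have hL'L : L' ≤ L := by
    rw [hL', AddSubgroup.closure_le]
    rintro x ⟨i, rfl⟩; exact hmem i
  haveI hSfin : Finite S := hS.to_subtype
  have hfx : ∀ x : L, ZSpan.fract b' (x : EuclideanSpace ℝ (Fin k)) ∈ S := by
    intro x
    apply hsub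
    constructor
    · have hfl : ((ZSpan.floor b' (x : EuclideanSpace ℝ (Fin k))) : EuclideanSpace ℝ (Fin k)) ∈ L' := by
        rw [← SetLike.mem_coe, hspan]
        exact SetLike.coe_mem _
      have heq : ZSpan.fract b' (x : EuclideanSpace ℝ (Fin k))
          = (x : EuclideanSpace ℝ (Fin k)) - (ZSpan.floor b' (x : EuclideanSpace ℝ (Fin k))) :=
        ZSpan.fract_apply b' _
      rw [SetLike.mem_coe, heq]
      exact sub_mem x.2 (hL'L hfl)
    · simpa using ZSpan.norm_fract_le b' (x : EuclideanSpace ℝ (Fin k))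
  let f : L → S := fun x => ⟨ZSpan.fract b' (x : EuclideanSpace ℝ (Fin k)), hfx x⟩
  have hrel : ∀ x y : L, (QuotientAddGroup.leftRel (L'.addSubgroupOf L)) x y ↔ f x = f y := by
    intro x y
    rw [QuotientAddGroup.leftRel_apply]
    constructor
    · intro h
      apply Subtype.ext
      show ZSpan.fract b' _ = ZSpan.fract b' _
      rw [ZSpan.fract_eq_fract]
      have : ((-x + y : L) : EuclideanSpace ℝ (Fin k)) ∈ L' := h
      rw [← SetLike.mem_coe, hspan] at this
      simpa using this
    · intro h
      have h2 : ZSpan.fract b' (x : EuclideanSpace ℝ (Fin k))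
          = ZSpan.fract b' (y : EuclideanSpace ℝ (Fin k)) := congrArg Subtype.val h
      rw [ZSpan.fract_eq_fract] at h2
      show ((-x + y : L) : EuclideanSpace ℝ (Fin k)) ∈ L'
      rw [← SetLike.mem_coe, hspan]
      simpa using h2
  let F : L ⧸ (L'.addSubgroupOf L) → S := fun q => Quotient.liftOn' q f (by
    intro x y h
    exact ((hrel x y).1 h))
  have hFinj : Function.Injective F := by
    intro q₁ q₂ h
    induction q₁ using Quotient.inductionOn'
    induction q₂ using Quotient.inductionOn'
    exact Quotient.sound' ((hrel _ _).2 h)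
  haveI : Finite (L ⧸ (L'.addSubgroupOf L)) := Finite.of_injective F hFinj
  constructor
  · exact AddSubgroup.index_ne_zero_of_finite
  · rw [AddSubgroup.relIndex, AddSubgroup.index_eq_card]
    exact Nat.card_le_card_of_injective F hFinj

/-- Every lattice `L` of `ℝ^k` contains a sublattice `L'` (a finite-index subgroup which is
again a lattice) with `λ(L') = λ(L)` and `λ(L') ≤ 2·τ(L')`. -/
theorem exists_controlled_sublattice (k : ℕ)
    (L : AddSubgroup (EuclideanSpace ℝ (Fin k))) (hL : IsLattice k L) :
    ∃ L' : AddSubgroup (EuclideanSpace ℝ (Fin k)),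
      L' ≤ L ∧ IsLattice k L' ∧ L'.relIndex L ≠ 0 ∧
      shortestGenRadius L' = shortestGenRadius L ∧
      shortestGenRadius L' ≤ 2 * shortestVector L' := by
  classical
  obtain ⟨b, hb⟩ := hL
  rcases Nat.eq_zero_or_pos k with hk | hk
  · subst hk
    refine ⟨L, le_rfl, ⟨b, hb⟩, by simp [AddSubgroup.relIndex_self], rfl, ?_⟩
    have h1 : shortestGenRadius L = 0 := by
      rw [shortestGenRadius]
      have huniv : {r : ℝ | ∃ v : Fin 0 → EuclideanSpace ℝ (Fin 0),
          LinearIndependent ℝ v ∧ (∀ i, v i ∈ L) ∧ ∀ i, ‖v i‖ ≤ r} = univ :=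
        eq_univ_of_forall fun r =>
          ⟨fun i => i.elim0, linearIndependent_empty_type, fun i => i.elim0, fun i => i.elim0⟩
      rw [huniv]
      exact Real.sInf_of_not_bddBelow not_bddBelow_univ
    have h2 : shortestVector L = 0 := by
      have hLbot : L = ⊥ := by
        rw [hb]
        rw [Set.range_eq_empty]
        exact AddSubgroup.closure_empty
      rw [shortestVector]
      have hemp : {r : ℝ | ∃ v ∈ L, v ≠ 0 ∧ r = ‖v‖} = ∅ := by
        rw [hLbot]; ext r; simp
      rw [hemp, Real.sInf_empty]
    rw [h1, h2]; norm_num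
  · haveI : Nonempty (Fin k) := ⟨⟨0, hk⟩⟩
    have hA : ∀ r, ((L : Set (EuclideanSpace ℝ (Fin k))) ∩ Metric.closedBall 0 r).Finite := by
      intro r
      have hLset : (L : Set (EuclideanSpace ℝ (Fin k)))
          = ((Submodule.span ℤ (Set.range ⇑b)) : Set (EuclideanSpace ℝ (Fin k))) := by
        rw [hb, ← Submodule.span_int_eq_addSubgroupClosure]; rfl
      rw [hLset]; exact finite_lattice_inter b r
    have hbL : ∀ i, b i ∈ L := fun i => by
      rw [hb]; exact AddSubgroup.subset_closure (mem_range_self i)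
    have hleast := genRadius_isLeast hk.ne' b L hA hbL
    set lam := shortestGenRadius L with hlam
    set Sbig := (L : Set (EuclideanSpace ℝ (Fin k))) ∩ Metric.closedBall 0 (k * lam) with hSbig
    have hSbigfin : Sbig.Finite := hA _
    have hlam0 : 0 ≤ lam := by
      obtain ⟨v, hlin, hmem, hnorm⟩ := hleast.1
      exact le_trans (norm_nonneg (v ⟨0, hk⟩)) (hnorm _)
    have hcard : Fintype.card (Fin k) = Module.finrank ℝ (EuclideanSpace ℝ (Fin k)) := by
      simp [finrank_euclideanSpace_fin]
    have helper : ∀ v : Fin k → EuclideanSpace ℝ (Fin k), LinearIndependent ℝ v →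
        (∀ i, v i ∈ L) → (∀ i, ‖v i‖ ≤ lam) →
        (AddSubgroup.closure (Set.range v)).relIndex L ≠ 0 ∧
        (AddSubgroup.closure (Set.range v)).relIndex L ≤ Nat.card Sbig := by
      intro v hlin hmem hnorm
      set b' := basisOfLinearIndependentOfCardEqFinrank hlin hcard with hb'
      have hcoe : ⇑b' = v := coe_basisOfLinearIndependentOfCardEqFinrank hlin hcard
      have hres := relindex_bound b' L Sbig hSbigfin (fun i => by rw [hcoe]; exact hmem i) ?_
      · rwa [hcoe] at hres
      · intro x hx
        refine ⟨hx.1, ?_⟩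
        have h1 : (∑ i, ‖b' i‖) ≤ k * lam := by
          rw [hcoe]
          calc ∑ i, ‖v i‖ ≤ ∑ _i : Fin k, lam := Finset.sum_le_sum fun i _ => hnorm i
            _ = k * lam := by simp [Finset.sum_const, nsmul_eq_mul]
        exact closedBall_subset_closedBall h1 hx.2
    set D := {n : ℕ | ∃ v : Fin k → EuclideanSpace ℝ (Fin k), LinearIndependent ℝ v ∧
        (∀ i, v i ∈ L) ∧ (∀ i, ‖v i‖ ≤ lam) ∧
        (AddSubgroup.closure (Set.range v)).relIndex L = n} with hD
    have hDne : D.Nonempty := by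
      obtain ⟨v, hlin, hmem, hnorm⟩ := hleast.1
      exact ⟨_, v, hlin, hmem, hnorm, rfl⟩
    have hDbdd : BddAbove D := by
      refine ⟨Nat.card Sbig, ?_⟩
      rintro n ⟨v, hlin, hmem, hnorm, rfl⟩
      exact (helper v hlin hmem hnorm).2
    obtain ⟨v, hlin, hmem, hnorm, hrel⟩ := Nat.sSup_mem hDne hDbdd
    set nstar := sSup D with hnstar
    set L' : AddSubgroup (EuclideanSpace ℝ (Fin k)) := AddSubgroup.closure (Set.range v)
      with hL'def
    have hL'L : L' ≤ L := by
      rw [hL'def, AddSubgroup.closure_le]; rintro x ⟨i, rfl⟩; exact hmem i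
    set b' := basisOfLinearIndependentOfCardEqFinrank hlin hcard with hb'def
    have hcoe : ⇑b' = v := coe_basisOfLinearIndependentOfCardEqFinrank hlin hcard
    have hL'lat : IsLattice k L' := ⟨b', by rw [hL'def, hcoe]⟩
    have hL'set : (L' : Set (EuclideanSpace ℝ (Fin k)))
        = ((Submodule.span ℤ (Set.range ⇑b')) : Set (EuclideanSpace ℝ (Fin k))) := by
      rw [hL'def, ← hcoe, ← Submodule.span_int_eq_addSubgroupClosure]; rfl
    have hvL' : ∀ i, v i ∈ L' := fun i => by
      rw [hL'def]; exact AddSubgroup.subset_closure (mem_range_self i)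
    have hgen' : shortestGenRadius L' = lam := by
      have hl : IsLeast {r : ℝ | ∃ w : Fin k → EuclideanSpace ℝ (Fin k),
          LinearIndependent ℝ w ∧ (∀ i, w i ∈ L') ∧ ∀ i, ‖w i‖ ≤ r} lam := by
        constructor
        · exact ⟨v, hlin, hvL', hnorm⟩
        · rintro r ⟨w, h1, h2, h3⟩
          exact hleast.2 ⟨w, h1, fun i => hL'L (h2 i), h3⟩
      rw [shortestGenRadius, hl.csInf_eq]
    have claim : ∀ w, w ∈ L' → w ≠ 0 → lam ≤ 2 * ‖w‖ := by
      intro w hw hwne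
      by_contra hcon
      push_neg at hcon
      have hwspan : w ∈ Submodule.span ℤ (Set.range ⇑b') := by
        rw [← SetLike.mem_coe, ← hL'set]; exact hw
      obtain ⟨c, hc⟩ := (Submodule.mem_span_range_iff_exists_fun ℤ).1 hwspan
      have hw' : w = ∑ i, (c i : ℝ) • b' i := by
        rw [← hc]
        exact (Finset.sum_congr rfl fun i _ => (Int.cast_smul_eq_zsmul ℝ (c i) (b' i))).symm
      have hcoord : ∀ jj, b'.repr w jj = (c jj : ℝ) := by
        intro jj
        rw [hw']
        exact congrFun (b'.repr_sum_self (fun i => (c i : ℝ))) jj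
      obtain ⟨j, hj⟩ : ∃ j, c j ≠ 0 := by
        by_contra hno; push_neg at hno
        exact hwne (by rw [hw']; simp [hno])
      set u := Function.update v j (w + w) with hu
      have hcoordu : ∀ i, b'.repr (u i) j = if i = j then 2 * (c j : ℝ) else 0 := by
        intro i
        rcases eq_or_ne i j with rfl | hij
        · rw [hu, if_pos rfl]
          simp only [Function.update_self, map_add, Finsupp.add_apply, hcoord]
          ring
        · rw [hu, Function.update_of_ne hij, ← hcoe, Module.Basis.repr_self,
            Finsupp.single_apply, if_neg hij, if_neg hij]
      have hwL' : w ∈ L' := hw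
      have huL' : ∀ i, u i ∈ L' := by
        intro i
        rcases eq_or_ne i j with rfl | hij
        · rw [hu, Function.update_self]; exact add_mem hwL' hwL'
        · rw [hu, Function.update_of_ne hij]; exact hvL' i
      have hunorm : ∀ i, ‖u i‖ ≤ lam := by
        intro i
        rcases eq_or_ne i j with rfl | hij
        · rw [hu, Function.update_self]
          calc ‖w + w‖ ≤ ‖w‖ + ‖w‖ := norm_add_le _ _
            _ ≤ lam := by linarith
        · rw [hu, Function.update_of_ne hij]; exact hnorm i
      have hulin : LinearIndependent ℝ u := by
        rw [Fintype.linearIndependent_iff]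
        intro g hg
        have hgj : g j = 0 := by
          have h0 : (b'.repr (∑ i, g i • u i)) j = 0 := by rw [hg]; simp
          rw [map_sum, Finsupp.coe_finset_sum, Finset.sum_apply] at h0
          simp only [map_smul, Finsupp.smul_apply, hcoordu, smul_eq_mul, mul_ite, mul_zero] at h0
          rw [Finset.sum_ite_eq' Finset.univ j] at h0
          simp only [Finset.mem_univ, if_pos] at h0
          have hcj : (2 * (c j : ℝ)) ≠ 0 := by
            simp only [ne_eq, mul_eq_zero]
            push_neg
            exact ⟨two_ne_zero, Int.cast_ne_zero.2 hj⟩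
          exact (mul_eq_zero.1 h0).resolve_right hcj
        have hsum : ∑ i, g i • v i = 0 := by
          rw [← hg]
          refine Finset.sum_congr rfl fun i _ => ?_
          rcases eq_or_ne i j with rfl | hij
          · simp [hgj]
          · rw [hu, Function.update_of_ne hij]
        exact fun i => Fintype.linearIndependent_iff.1 hlin g hsum i
      set L'' := AddSubgroup.closure (Set.range u) with hL''
      have hL''L' : L'' ≤ L' := by
        rw [hL'', AddSubgroup.closure_le]
        rintro x ⟨i, rfl⟩; exact huL' i
      have hnotin : v j ∉ L'' := by
        intro hmem'
        have hle : L'' ≤ AddSubgroup.comap (b'.coord j).toAddMonoidHom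
            (AddSubgroup.zmultiples ((2 * c j : ℤ) : ℝ)) := by
          rw [hL'', AddSubgroup.closure_le]
          rintro x ⟨i, rfl⟩
          rw [SetLike.mem_coe, AddSubgroup.mem_comap]
          show (b'.coord j) (u i) ∈ _
          rw [Module.Basis.coord_apply, hcoordu i]
          rcases eq_or_ne i j with rfl | hij
          · simp only [if_pos rfl]
            exact AddSubgroup.mem_zmultiples_iff.2 ⟨1, by rw [one_smul]; push_cast; ring⟩
          · simp only [if_neg hij]; exact zero_mem _
        have h1 : (b'.coord j) (v j) ∈ AddSubgroup.zmultiples ((2 * c j : ℤ) : ℝ) := hle hmem'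
        rw [← hcoe, Module.Basis.coord_apply, Module.Basis.repr_self] at h1
        simp only [Finsupp.single_eq_same] at h1
        obtain ⟨n, hn⟩ := AddSubgroup.mem_zmultiples_iff.1 h1
        rw [zsmul_eq_mul] at hn
        have hint : (n * (2 * c j) : ℤ) = 1 := by exact_mod_cast hn
        have h2 : (2 : ℤ) ∣ 1 := ⟨n * c j, by rw [← hint]; ring⟩
        norm_num at h2
      have hub := helper u hulin (fun i => hL'L (huL' i)) hunorm
      have hmul := AddSubgroup.relIndex_mul_relIndex L'' L' L hL''L' hL'L
      have hmemD : L''.relIndex L ∈ D := ⟨u, hulin, fun i => hL'L (huL' i), hunorm, rfl⟩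
      have hle'' : L''.relIndex L ≤ nstar := le_csSup hDbdd hmemD
      have hm0 : L''.relIndex L' ≠ 0 := by
        intro h
        rw [h, zero_mul] at hmul
        exact hub.1 hmul.symm
      have hm1 : L''.relIndex L' ≠ 1 := by
        intro h
        exact hnotin (AddSubgroup.relIndex_eq_one.1 h (hvL' j))
      have hn0 : nstar ≠ 0 := hrel ▸ (helper v hlin hmem hnorm).1
      have h2m : 2 ≤ L''.relIndex L' := by omega
      rw [hrel] at hmul
      have hmn : 2 * nstar ≤ L''.relIndex L' * nstar := Nat.mul_le_mul_right _ h2m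
      have hcontr : 2 * nstar ≤ nstar := le_trans (hmn.trans_eq hmul) hle''
      omega
    have htau : lam / 2 ≤ shortestVector L' := by
      rw [shortestVector]
      apply le_csInf
      · exact ⟨‖v ⟨0, hk⟩‖, v ⟨0, hk⟩, hvL' _, hlin.ne_zero _, rfl⟩
      · rintro r ⟨w, hw, hwne, rfl⟩
        linarith [claim w hw hwne]
    exact ⟨L', hL'L, hL'lat, hrel ▸ (helper v hlin hmem hnorm).1, hgen', by
      rw [hgen']; linarith⟩
end
end

section
/- Let A be an almost abelian topological group. Then there exists k ≥ 0 such that for every compact, open, normal subgroup N of A, the quotient group A/N is discrete, finitely generated and virtually abelian of rank k. (This k is called the rank rk(A) of A.) -/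
noncomputable section

/-- Virtually nilpotent group. -/
def VirtuallyNilpotent (H : Type*) [Group H] : Prop :=
  ∃ K : Subgroup H, K.FiniteIndex ∧ Group.IsNilpotent K

/-- Virtually abelian group. -/
def VirtuallyAbelian (H : Type*) [Group H] : Prop :=
  ∃ K : Subgroup H, K.FiniteIndex ∧ ∀ a ∈ K, ∀ b ∈ K, a * b = b * a

/-- A topological group is almost nilpotent if it contains a compact open normal subgroup `N`
such that the quotient `A/N` is discrete, finitely generated and virtually nilpotent. -/
def AlmostNilpotent (A : Type*) [Group A] [TopologicalSpace A] : Prop :=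
  ∃ (N : Subgroup A) (_ : N.Normal), IsOpen (N : Set A) ∧ IsCompact (N : Set A) ∧
    DiscreteTopology (A ⧸ N) ∧ Group.FG (A ⧸ N) ∧ VirtuallyNilpotent (A ⧸ N)

/-- A topological group is almost abelian if it contains a compact open normal subgroup `N`
such that the quotient `A/N` is discrete, finitely generated and virtually abelian. -/
def AlmostAbelian (A : Type*) [Group A] [TopologicalSpace A] : Prop :=
  ∃ (N : Subgroup A) (_ : N.Normal), IsOpen (N : Set A) ∧ IsCompact (N : Set A) ∧
    DiscreteTopology (A ⧸ N) ∧ Group.FG (A ⧸ N) ∧ VirtuallyAbelian (A ⧸ N)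

/-- A discrete, finitely generated, virtually abelian group has rank `k` if it contains a
finite-index free abelian subgroup isomorphic to `ℤ^k`. -/
def HasFreeAbelianRank (H : Type*) [Group H] (k : ℕ) : Prop :=
  ∃ K : Subgroup H, K.FiniteIndex ∧ Nonempty (↥K ≃* Multiplicative (Fin k → ℤ))

/-- `k` is a rank of the almost abelian group `A`, witnessed by some compact open normal
subgroup. -/
def IsRankOf (A : Type*) [Group A] [TopologicalSpace A] (k : ℕ) : Prop :=
  ∃ (N : Subgroup A) (_ : N.Normal), IsOpen (N : Set A) ∧ IsCompact (N : Set A) ∧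
    DiscreteTopology (A ⧸ N) ∧ Group.FG (A ⧸ N) ∧ HasFreeAbelianRank (A ⧸ N) k

/-- A closed subgroup `H` of a topological group `G` is cocompact if the quotient space
`G/H` is compact. -/
def CocompactIn {G : Type*} [Group G] [TopologicalSpace G] (H : Subgroup G) : Prop :=
  CompactSpace (G ⧸ H)

/-- `H` and `K` are almost commensurable: `H ∩ K` is cocompact in both `H` and `K`. -/
def AlmostCommensurable {G : Type*} [Group G] [TopologicalSpace G] (H K : Subgroup G) : Prop :=
  CompactSpace (↥H ⧸ (H ⊓ K).subgroupOf H) ∧ CompactSpace (↥K ⧸ (H ⊓ K).subgroupOf K)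

/-- `H` is almost commensurated in `G`: `H` and `gHg⁻¹` are almost commensurable for all
`g ∈ G`. -/
def AlmostCommensurated {G : Type*} [Group G] [TopologicalSpace G] (H : Subgroup G) : Prop :=
  ∀ g : G, AlmostCommensurable H (H.map (MulAut.conj g).toMonoidHom)


section AuxiliaryRankLemmas

open Multiplicative

abbrev Zk (k : ℕ) := Multiplicative (Fin k → ℤ)

lemma zk_torsionfree {k : ℕ} (z : Zk k) (h : IsOfFinOrder z) : z = 1 := by
  obtain ⟨n, hn, hzn⟩ := isOfFinOrder_iff_pow_eq_one.mp h
  have : ofAdd (n • z.toAdd) = ofAdd (0 : Fin k → ℤ) := by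
    rw [ofAdd_nsmul]; simpa using hzn
  have h2 : n • z.toAdd = 0 := ofAdd.injective this
  have h3 : z.toAdd = 0 := by
    funext i
    have := congrFun h2 i
    have h4 : n = 0 ∨ z.toAdd i = 0 := by simpa [smul_eq_zero] using this
    exact h4.resolve_left (by omega)
  simpa using congrArg ofAdd h3

lemma finiteIndex_subgroup_zk_equiv {k : ℕ} (K : Subgroup (Zk k)) (hK : K.FiniteIndex) :
    Nonempty (↥K ≃* Zk k) := by
  classical
  set S : Submodule ℤ (Fin k → ℤ) := AddSubgroup.toIntSubmodule (Subgroup.toAddSubgroup' K) with hS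
  have memS : ∀ x : Fin k → ℤ, x ∈ S ↔ ofAdd x ∈ K := by
    intro x; rfl
  -- S is free and finite
  obtain ⟨n, bS⟩ := Submodule.basisOfPid (Pi.basisFun ℤ (Fin k)) S
  haveI : Module.Free ℤ ↥S := Module.Free.of_basis bS
  haveI : Module.Finite ℤ ↥S := Module.Finite.of_basis bS
  -- the index
  set m : ℕ := K.index with hm
  have hm0 : (m : ℤ) ≠ 0 := by exact_mod_cast hK.index_ne_zero
  -- injection (Fin k → ℤ) →ₗ S
  have hmem : ∀ x : Fin k → ℤ, (m : ℤ) • x ∈ S := by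
    intro x
    rw [memS]
    have : ofAdd ((m : ℤ) • x) = (ofAdd x) ^ (m : ℤ) := ofAdd_zsmul _ _
    rw [this]
    have := K.pow_index_mem (ofAdd x)
    simpa [zpow_natCast] using this
  let f : (Fin k → ℤ) →ₗ[ℤ] ↥S :=
    LinearMap.codRestrict S (LinearMap.lsmul ℤ (Fin k → ℤ) (m : ℤ)) hmem
  have hf : Function.Injective f := by
    intro x y hxy
    have : (m : ℤ) • x = (m : ℤ) • y := congrArg Subtype.val hxy
    exact smul_right_injective _ hm0 this
  have h1 : Module.finrank ℤ (Fin k → ℤ) ≤ Module.finrank ℤ ↥S :=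
    LinearMap.finrank_le_finrank_of_injective hf
  have h2 : Module.finrank ℤ ↥S ≤ Module.finrank ℤ (Fin k → ℤ) := S.finrank_le
  have hkk : Module.finrank ℤ (Fin k → ℤ) = k := by simp
  have hfr : Module.finrank ℤ ↥S = k := le_antisymm (h2.trans_eq hkk) (hkk.symm.trans_le h1)
  -- build linear equiv
  have hcard : Fintype.card (Module.Free.ChooseBasisIndex ℤ ↥S) = k := by
    rw [← Module.finrank_eq_card_chooseBasisIndex]; exact hfr
  let e : ↥S ≃ₗ[ℤ] (Fin k → ℤ) :=
    (Module.Free.chooseBasis ℤ ↥S).equiv (Pi.basisFun ℤ (Fin k))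
      (Fintype.equivFinOfCardEq hcard)
  -- build the MulEquiv
  refine ⟨{ toFun := fun x => ofAdd (e ⟨x.1.toAdd, (memS _).mpr (by simpa using x.2)⟩)
            invFun := fun v => ⟨ofAdd ((e.symm v.toAdd : ↥S) : Fin k → ℤ),
              (memS _).mp (e.symm v.toAdd).2⟩
            left_inv := ?_, right_inv := ?_, map_mul' := ?_ }⟩
  · intro x
    ext
    simp
  · intro v
    simp
  · intro x y
    rw [← ofAdd_add, ← map_add]
    rfl

lemma closure_basis_eq_top (k : ℕ) :
    Subgroup.closure (Set.range fun i : Fin k => ofAdd (Pi.single i (1:ℤ))) = ⊤ := by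
  classical
  rw [eq_top_iff]
  rintro z -
  set U := Subgroup.closure (Set.range fun i : Fin k => ofAdd (Pi.single i (1:ℤ))) with hU
  have key : ∀ (s : Finset (Fin k)) (v : Fin k → ℤ), ofAdd (∑ i ∈ s, Pi.single i (v i)) ∈ U := by
    intro s v
    induction s using Finset.induction_on with
    | empty => simpa using U.one_mem
    | @insert a s ha ih =>
        rw [Finset.sum_insert ha, ofAdd_add]
        refine U.mul_mem ?_ ih
        have h1 : (Pi.single a (v a) : Fin k → ℤ) = (v a) • (Pi.single a (1:ℤ) : Fin k → ℤ) := by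
          funext j
          by_cases hj : j = a <;> simp [hj, Pi.single_apply]
        rw [h1, ofAdd_zsmul]
        exact U.zpow_mem (Subgroup.subset_closure ⟨a, rfl⟩) _
  have := key Finset.univ z.toAdd
  rwa [Finset.univ_sum_single] at this

lemma pow_mem_closure_pow (k n : ℕ) (z : Zk k) :
    z ^ n ∈ Subgroup.closure (Set.range fun i : Fin k => ofAdd (Pi.single i (1:ℤ)) ^ n) := by
  set W := Subgroup.closure (Set.range fun i : Fin k => ofAdd (Pi.single i (1:ℤ)) ^ n) with hW
  have hle : Subgroup.closure (Set.range fun i : Fin k => ofAdd (Pi.single i (1:ℤ)))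
      ≤ W.comap (powMonoidHom n) := by
    rw [Subgroup.closure_le]
    rintro _ ⟨i, rfl⟩
    exact Subgroup.subset_closure ⟨i, rfl⟩
  have hz : z ∈ Subgroup.closure (Set.range fun i : Fin k => ofAdd (Pi.single i (1:ℤ))) := by
    rw [closure_basis_eq_top]; trivial
  exact hle hz

lemma closure_pow_finiteIndex (k n : ℕ) (hn : n ≠ 0) :
    (Subgroup.closure (Set.range fun i : Fin k => ofAdd (Pi.single i (1:ℤ)) ^ n)).FiniteIndex := by
  haveI : NeZero n := ⟨hn⟩
  set W := Subgroup.closure (Set.range fun i : Fin k => ofAdd (Pi.single i (1:ℤ)) ^ n) with hW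
  let g0 : (Fin k → ℤ) →+ (Fin k → ZMod n) :=
    { toFun := fun v i => ((v i : ℤ) : ZMod n)
      map_zero' := by funext i; simp
      map_add' := by intro a b; funext i; simp [Pi.add_apply] }
  let g : Zk k →* Multiplicative (Fin k → ZMod n) := AddMonoidHom.toMultiplicative g0
  have hker : g.ker ≤ W := by
    intro z hz
    have hz' : (fun i => ((z.toAdd i : ℤ) : ZMod n)) = (fun _ => (0 : ZMod n)) := by
      have : g z = 1 := hz
      exact congrArg Multiplicative.toAdd this
    have hd : ∀ i, (n:ℤ) ∣ z.toAdd i := by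
      intro i
      have : ((z.toAdd i : ℤ) : ZMod n) = 0 := congrFun hz' i
      exact (ZMod.intCast_zmod_eq_zero_iff_dvd _ n).mp this
    set w : Fin k → ℤ := fun i => z.toAdd i / n with hw
    have hzw : z = (ofAdd w) ^ n := by
      rw [← ofAdd_nsmul]
      have h3 : z.toAdd = n • w := by
        funext i
        simp only [hw, Pi.smul_apply, nsmul_eq_mul]
        exact (Int.mul_ediv_cancel' (hd i)).symm
      rw [← h3, ofAdd_toAdd]
    rw [hzw]
    exact pow_mem_closure_pow k n (ofAdd w)
  haveI : Finite (Multiplicative (Fin k → ZMod n)) := by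
    unfold Multiplicative
    infer_instance
  haveI : Finite (Zk k ⧸ g.ker) := Finite.of_equiv _ (QuotientGroup.quotientKerEquivRange g).symm.toEquiv
  have hfk : g.ker.FiniteIndex := Subgroup.finiteIndex_of_finite_quotient
  refine ⟨fun h0 => hfk.index_ne_zero ?_⟩
  have := Subgroup.index_dvd_of_le hker
  rw [h0] at this
  exact Nat.eq_zero_of_zero_dvd this

lemma exists_free_subgroup_of_hom {M : Type*} [CommGroup M] {k : ℕ} (φ : M →* Zk k)
    (hker : Finite ↥φ.ker) (hrange : φ.range.FiniteIndex) :
    ∃ L : Subgroup M, L.FiniteIndex ∧ Nonempty (↥L ≃* Zk k) := by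
  classical
  obtain ⟨e⟩ := finiteIndex_subgroup_zk_equiv φ.range hrange
  let ψ : M →* Zk k := e.toMonoidHom.comp φ.rangeRestrict
  have hψsurj : Function.Surjective ψ := e.surjective.comp φ.rangeRestrict_surjective
  have hψker : ∀ x, ψ x = 1 ↔ φ x = 1 := by
    intro x
    constructor
    · intro h
      have h1 : φ.rangeRestrict x = 1 := by
        apply e.injective; rw [map_one]; exact h
      have := congrArg Subtype.val h1
      simpa using this
    · intro h
      have h1 : φ.rangeRestrict x = 1 := by
        exact Subtype.ext h
      simp [ψ, h1]
  choose c hc using fun i : Fin k => hψsurj (ofAdd (Pi.single i (1:ℤ)))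
  let s0 : (Fin k → ℤ) →ₗ[ℤ] Additive M :=
    (Pi.basisFun ℤ (Fin k)).constr ℤ (fun i => Additive.ofMul (c i))
  let s : Zk k →* M := AddMonoidHom.toMultiplicativeLeft s0.toAddMonoidHom
  have hs : ∀ i, s (ofAdd (Pi.single i (1:ℤ))) = c i := by
    intro i
    show Additive.toMul (s0 (Pi.single i (1:ℤ))) = c i
    have : (Pi.single i (1:ℤ)) = Pi.basisFun ℤ (Fin k) i := by simp [Pi.basisFun_apply]
    rw [this, Module.Basis.constr_basis]
    rfl
  -- ψ ∘ s = id
  have hsec : ∀ z : Zk k, ψ (s z) = z := by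
    let E : Subgroup (Zk k) :=
      { carrier := {z | ψ (s z) = z}
        one_mem' := by simp
        mul_mem' := by intro a b ha hb; simp only [Set.mem_setOf_eq, map_mul] at *; rw [ha, hb]
        inv_mem' := by intro a ha; simp only [Set.mem_setOf_eq, map_inv] at *; rw [ha] }
    have hE : Subgroup.closure (Set.range fun i : Fin k => ofAdd (Pi.single i (1:ℤ))) ≤ E := by
      rw [Subgroup.closure_le]
      rintro _ ⟨i, rfl⟩
      show ψ (s (ofAdd (Pi.single i (1:ℤ)))) = _
      rw [hs i, hc i]
    intro z
    have : z ∈ E := hE (by rw [closure_basis_eq_top]; trivial)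
    exact this
  have hsinj : Function.Injective s := by
    intro a b hab
    have := congrArg ψ hab
    rwa [hsec, hsec] at this
  refine ⟨s.range, ?_, ⟨(MulEquiv.ofBijective (s.rangeRestrict)
      ⟨fun a b hab => hsinj (congrArg Subtype.val hab), s.rangeRestrict_surjective⟩).symm⟩⟩
  -- finite index
  have hq : Function.Surjective (fun x : ↥ψ.ker => (QuotientGroup.mk x.1 : M ⧸ s.range)) := by
    intro q
    induction q using QuotientGroup.induction_on with
    | H m =>
      refine ⟨⟨m * (s (ψ m))⁻¹, ?_⟩, ?_⟩
      · show ψ _ = 1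
        rw [map_mul, map_inv, hsec, mul_inv_cancel]
      · show QuotientGroup.mk _ = _
        rw [QuotientGroup.eq]
        exact ⟨ψ m, by group⟩
  haveI hkψ : Finite ↥ψ.ker := by
    have : ψ.ker = φ.ker := by
      ext x; simpa [MonoidHom.mem_ker] using hψker x
    rw [this]; exact hker
  haveI : Finite (M ⧸ s.range) := Finite.of_surjective _ hq
  exact Subgroup.finiteIndex_of_finite_quotient

lemma exists_free_subgroup_of_fg (M : Type*) [CommGroup M] [Group.FG M] :
    ∃ (r : ℕ) (L : Subgroup M), L.FiniteIndex ∧ Nonempty (↥L ≃* Zk r) := by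
  classical
  haveI : Module.Finite ℤ (Additive M) := Module.Finite.iff_addGroup_fg.mpr inferInstance
  set T := Submodule.torsion ℤ (Additive M) with hT
  haveI : Module.IsTorsionFree ℤ (Additive M ⧸ T) := inferInstance
  haveI : Module.Free ℤ (Additive M ⧸ T) := Module.free_of_finite_type_torsion_free'
  set r := Module.finrank ℤ (Additive M ⧸ T) with hr
  have hcard : Fintype.card (Module.Free.ChooseBasisIndex ℤ (Additive M ⧸ T)) = r := by
    rw [← Module.finrank_eq_card_chooseBasisIndex]
  let e : (Additive M ⧸ T) ≃ₗ[ℤ] (Fin r → ℤ) :=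
    (Module.Free.chooseBasis ℤ (Additive M ⧸ T)).equiv (Pi.basisFun ℤ (Fin r))
      (Fintype.equivFinOfCardEq hcard)
  let φ0 : Additive M →ₗ[ℤ] (Fin r → ℤ) := e.toLinearMap.comp T.mkQ
  let φ : M →* Zk r := AddMonoidHom.toMultiplicativeRight φ0.toAddMonoidHom
  have hφ : ∀ x : M, φ x = ofAdd (φ0 (Additive.ofMul x)) := fun x => rfl
  refine ⟨r, exists_free_subgroup_of_hom φ ?_ ?_⟩
  · -- kernel finite
    haveI : Module.Finite ℤ ↥T := inferInstance
    haveI : Finite ↥T := Module.finite_of_fg_torsion _ (Submodule.torsion_isTorsion)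
    refine Finite.of_injective (fun x : ↥φ.ker => (⟨Additive.ofMul x.1, ?_⟩ : ↥T)) ?_
    · have hx : φ0 (Additive.ofMul x.1) = 0 := by
        have := x.2
        simp only [MonoidHom.mem_ker, hφ] at this
        exact ofAdd.injective this
      have : e (T.mkQ (Additive.ofMul x.1)) = 0 := hx
      have h2 : T.mkQ (Additive.ofMul x.1) = 0 := by
        apply e.injective; simpa using this
      simpa [Submodule.Quotient.mk_eq_zero] using h2
    · intro a b hab
      ext
      simpa using congr_arg (fun t : ↥T => Additive.toMul t.1) hab
  · -- range = ⊤
    have hsurj : Function.Surjective φ := by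
      intro z
      obtain ⟨q, hq⟩ := e.surjective z.toAdd
      obtain ⟨m, rfl⟩ := T.mkQ_surjective q
      refine ⟨Additive.toMul m, ?_⟩
      rw [hφ]
      show ofAdd (e (T.mkQ m)) = z
      rw [hq, ofAdd_toAdd]
    rw [MonoidHom.range_eq_top.mpr hsurj]
    infer_instance

lemma flatten_subgroup {G : Type*} [Group G] {D : Subgroup G} (hD : D.FiniteIndex) {k : ℕ}
    (L' : Subgroup ↥D) (hL' : L'.FiniteIndex) (hiso : Nonempty (↥L' ≃* Zk k)) :
    ∃ L : Subgroup G, L.FiniteIndex ∧ Nonempty (↥L ≃* Zk k) := by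
  refine ⟨L'.map D.subtype, ⟨?_⟩, ?_⟩
  · have hle : L'.map D.subtype ≤ D := by
      rintro x ⟨y, hy, rfl⟩; exact y.2
    have hsub : (L'.map D.subtype).subgroupOf D = L' :=
      Subgroup.comap_map_eq_self_of_injective D.subtype_injective _
    have hrel : (L'.map D.subtype).relIndex D ≠ 0 := by
      unfold Subgroup.relIndex
      rw [hsub]; exact hL'.index_ne_zero
    have hmul := Subgroup.relIndex_mul_index hle
    intro h0
    rw [h0] at hmul
    rcases Nat.mul_eq_zero.mp hmul with h | h
    · exact hrel h
    · exact hD.index_ne_zero h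
  · obtain ⟨e⟩ := hiso
    exact ⟨(Subgroup.equivMapOfInjective L' D.subtype D.subtype_injective).symm.trans e⟩

lemma push_rank {G H : Type*} [Group G] [Group H] {f : G →* H}
    (hf : Function.Surjective f) (hker : Finite ↥f.ker) {k : ℕ}
    (K : Subgroup G) (hKfi : K.FiniteIndex) (ι : ↥K ≃* Zk k) :
    ∃ L : Subgroup H, L.FiniteIndex ∧ Nonempty (↥L ≃* Zk k) := by
  refine ⟨K.map f, ⟨?_⟩, ?_⟩
  · have h1 : (K.map f).index = (K ⊔ f.ker).index := by
      rw [← Subgroup.index_comap_of_surjective _ hf, Subgroup.comap_map_eq]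
    have h2 := Subgroup.index_dvd_of_le (le_sup_left : K ≤ K ⊔ f.ker)
    intro h0
    rw [h0] at h1
    rw [← h1] at h2
    exact hKfi.index_ne_zero (Nat.eq_zero_of_zero_dvd h2)
  · have hinj : Function.Injective (f.subgroupMap K) := by
      intro x y hxy
      have hxy1 : (f.subgroupMap K) (x * y⁻¹) = 1 := by
        rw [map_mul, map_inv, hxy, mul_inv_cancel]
      have hker1 : f ((x * y⁻¹ : ↥K) : G) = 1 := congrArg Subtype.val hxy1
      -- the element is in f.ker, hence of finite order
      have hmem : ((x * y⁻¹ : ↥K) : G) ∈ f.ker := hker1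
      have hfin : IsOfFinOrder ((x * y⁻¹ : ↥K) : G) := by
        have hn : (⟨_, hmem⟩ : ↥f.ker) ^ (Nat.card ↥f.ker) = 1 := pow_card_eq_one'
        have hpow : ((x * y⁻¹ : ↥K) : G) ^ (Nat.card ↥f.ker) = 1 := by
          have := congrArg Subtype.val hn
          simpa using this
        refine isOfFinOrder_iff_pow_eq_one.mpr ⟨Nat.card ↥f.ker, Nat.card_pos, hpow⟩
      have hfin2 : IsOfFinOrder (x * y⁻¹ : ↥K) := by
        obtain ⟨m, hm, hm1⟩ := isOfFinOrder_iff_pow_eq_one.mp hfin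
        refine isOfFinOrder_iff_pow_eq_one.mpr ⟨m, hm, ?_⟩
        ext; simpa using hm1
      have hfin3 : IsOfFinOrder (ι (x * y⁻¹)) := by
        obtain ⟨m, hm, hm1⟩ := isOfFinOrder_iff_pow_eq_one.mp hfin2
        exact isOfFinOrder_iff_pow_eq_one.mpr ⟨m, hm, by rw [← map_pow, hm1, map_one]⟩
      have : ι (x * y⁻¹) = 1 := zk_torsionfree _ hfin3
      have : x * y⁻¹ = 1 := by
        apply ι.injective; rw [this, map_one]
      exact mul_inv_eq_one.mp this
    exact ⟨((MulEquiv.ofBijective (f.subgroupMap K)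
      ⟨hinj, f.subgroupMap_surjective K⟩).symm.trans ι)⟩

lemma pull_rank {G H : Type*} [Group G] [Group H] {f : G →* H}
    (hf : Function.Surjective f) (hker : Finite ↥f.ker) {k : ℕ}
    (K : Subgroup H) (hKfi : K.FiniteIndex) (ι : ↥K ≃* Zk k) :
    ∃ L : Subgroup G, L.FiniteIndex ∧ Nonempty (↥L ≃* Zk k) := by
  classical
  haveI := hKfi
  haveI : Finite (MulAut ↥f.ker) :=
    Finite.of_injective (fun (e : MulAut ↥f.ker) => (e : ↥f.ker → ↥f.ker)) DFunLike.coe_injective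
  set ρ : G →* MulAut ↥f.ker := MulAut.conjNormal with hρ
  haveI : Finite (G ⧸ ρ.ker) :=
    Finite.of_equiv _ (QuotientGroup.quotientKerEquivRange ρ).symm.toEquiv
  haveI hρfi : ρ.ker.FiniteIndex := Subgroup.finiteIndex_of_finite_quotient
  haveI hcomapfi : (K.comap f).FiniteIndex :=
    ⟨by rw [Subgroup.index_comap_of_surjective _ hf]; exact hKfi.index_ne_zero⟩
  set C : Subgroup G := ρ.ker ⊓ K.comap f with hC
  haveI hCfi : C.FiniteIndex := inferInstance
  -- commutation of C with the kernel
  have hCcomm : ∀ g ∈ C, ∀ x ∈ f.ker, g * x = x * g := by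
    intro g hg x hx
    have h1 : ρ g = 1 := hg.1
    have h2 : (ρ g) ⟨x, hx⟩ = ⟨x, hx⟩ := by rw [h1]; rfl
    have h3 : g * x * g⁻¹ = x := by
      have := congrArg Subtype.val h2
      simpa [hρ, MulAut.conjNormal_apply] using this
    calc g * x = (g * x * g⁻¹) * g := by group
    _ = x * g := by rw [h3]
  have hKcomm : ∀ u v : H, u ∈ K → v ∈ K → u * v = v * u := by
    intro u v hu hv
    have := congrArg Subtype.val (ι.injective (by rw [map_mul, map_mul, mul_comm] :
      ι (⟨u, hu⟩ * ⟨v, hv⟩) = ι (⟨v, hv⟩ * ⟨u, hu⟩)))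
    simpa using this
  -- P = f(C) and its identification with Zk
  set P : Subgroup H := C.map f with hP
  have hPK : P ≤ K := by
    rintro x ⟨g, hg, rfl⟩; exact hg.2
  have hPfi : P.FiniteIndex := by
    refine ⟨fun h0 => ?_⟩
    have h1 : P.index = (C ⊔ f.ker).index := by
      rw [← Subgroup.index_comap_of_surjective _ hf, Subgroup.comap_map_eq]
    have h2 := Subgroup.index_dvd_of_le (le_sup_left : C ≤ C ⊔ f.ker)
    rw [h0] at h1; rw [← h1] at h2
    exact hCfi.index_ne_zero (Nat.eq_zero_of_zero_dvd h2)
  have hP'fi : ((P.subgroupOf K)).FiniteIndex := by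
    refine ⟨fun h0 => ?_⟩
    have := Subgroup.relIndex_mul_index hPK
    unfold Subgroup.relIndex at this
    rw [h0, zero_mul] at this
    exact hPfi.index_ne_zero this.symm
  set P'' : Subgroup (Zk k) := (P.subgroupOf K).map ι.toMonoidHom with hP''
  have hP''fi : P''.FiniteIndex := by
    refine ⟨fun h0 => ?_⟩
    have hsur : Function.Surjective ⇑ι.toMonoidHom := ι.surjective
    have h1 : P''.index = ((P.subgroupOf K) ⊔ ι.toMonoidHom.ker).index := by
      rw [← Subgroup.index_comap_of_surjective _ hsur, Subgroup.comap_map_eq]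
    have hke : ι.toMonoidHom.ker = ⊥ :=
      (MonoidHom.ker_eq_bot_iff ι.toMonoidHom).mpr ι.injective
    rw [hke, sup_bot_eq] at h1
    rw [h0] at h1
    exact hP'fi.index_ne_zero h1.symm
  obtain ⟨e2⟩ := finiteIndex_subgroup_zk_equiv P'' hP''fi
  let eP : ↥P ≃* Zk k :=
    ((Subgroup.subgroupOfEquivOfLe hPK).symm.trans
      (MulEquiv.subgroupMap ι (P.subgroupOf K))).trans e2
  -- the surjection Φ : C → Zk
  have hfCmem : ∀ x : ↥C, f (x : G) ∈ P := fun x => ⟨x.1, x.2, rfl⟩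
  let fC : ↥C →* ↥P := (f.comp C.subtype).codRestrict P hfCmem
  have hfCsurj : Function.Surjective fC := by
    rintro ⟨y, g, hg, rfl⟩
    exact ⟨⟨g, hg⟩, rfl⟩
  let Φ : ↥C →* Zk k := eP.toMonoidHom.comp fC
  have hΦsurj : Function.Surjective Φ := eP.surjective.comp hfCsurj
  have hΦker : ∀ x : ↥C, Φ x = 1 → f (x : G) = 1 := by
    intro x hx
    have h1 : fC x = 1 := by
      apply eP.injective; rw [map_one]; exact hx
    exact congrArg Subtype.val h1
  -- n and the generators
  set n : ℕ := Nat.card ↥f.ker with hn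
  have hn0 : n ≠ 0 := Nat.card_pos.ne'
  choose c hc using fun i : Fin k => hΦsurj (ofAdd (Pi.single i (1:ℤ)))
  -- the subgroup D
  set S : Set G := (Set.range fun i : Fin k => ((c i : G)) ^ n) ∪ ((f.ker ⊓ C : Subgroup G) : Set G)
    with hS
  have hSC : S ⊆ (C : Set G) := by
    rintro x (⟨i, rfl⟩ | hx)
    · exact C.pow_mem (c i).2 n
    · exact hx.2
  set D : Subgroup G := Subgroup.closure S with hD
  have hDC : D ≤ C := by rw [hD, Subgroup.closure_le]; exact hSC
  -- the key commutation result
  have hcomm1 : ∀ a b : G, a ∈ C → b ∈ C → Commute (a ^ n) b := by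
    intro a b ha hb
    set z : G := a⁻¹ * b⁻¹ * a * b with hz
    have hzker : z ∈ f.ker := by
      have hfab : f a * f b = f b * f a := hKcomm _ _ ha.2 hb.2
      have hfz : f z = (f a)⁻¹ * (f b)⁻¹ * (f a * f b) := by
        simp [hz, mul_assoc]
      rw [MonoidHom.mem_ker, hfz, hfab]
      group
    have hab : a * b = b * a * z := by rw [hz]; group
    have haz : Commute a z := hCcomm a ha z hzker
    have hzn : z ^ n = 1 := by
      have h1 : (⟨z, hzker⟩ : ↥f.ker) ^ n = 1 := by rw [hn]; exact pow_card_eq_one'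
      have := congrArg Subtype.val h1
      simpa using this
    have key : ∀ m : ℕ, a ^ m * b = b * a ^ m * z ^ m := by
      intro m
      induction m with
      | zero => simp
      | succ m ih =>
        have hzam : z * a ^ m = a ^ m * z := (haz.pow_left m).eq.symm
        calc a ^ (m+1) * b = a * (a ^ m * b) := by rw [pow_succ', mul_assoc]
          _ = a * (b * a ^ m * z ^ m) := by rw [ih]
          _ = (a * b) * a ^ m * z ^ m := by simp [mul_assoc]
          _ = (b * a * z) * a ^ m * z ^ m := by rw [hab]
          _ = b * a * (z * a ^ m) * z ^ m := by simp [mul_assoc]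
          _ = b * a * (a ^ m * z) * z ^ m := by rw [hzam]
          _ = b * (a * a ^ m) * (z * z ^ m) := by simp [mul_assoc]
          _ = b * a ^ (m+1) * z ^ (m+1) := by rw [← pow_succ', ← pow_succ']
    have h := key n
    rw [hzn, mul_one] at h
    exact h
  -- pairwise commutation of the generating set
  have hpair : ∀ x ∈ S, ∀ y ∈ S, Commute x y := by
    intro x hx y hy
    rcases hx with ⟨i, rfl⟩ | hx
    · exact hcomm1 _ _ (c i).2 (hSC hy)
    · exact (hCcomm y (hSC hy) x hx.1).symm
  have hDcomm : ∀ x ∈ D, ∀ y ∈ D, x * y = y * x := by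
    have h1 : ∀ x ∈ S, ∀ y ∈ D, Commute x y := by
      intro x hx y hy
      rw [hD] at hy
      induction hy using Subgroup.closure_induction with
      | mem s hs => exact hpair x hx s hs
      | one => exact Commute.one_right x
      | mul u v _ _ hu hv => exact hu.mul_right hv
      | inv u _ hu => exact hu.inv_right
    intro x hx y hy
    have hx' : x ∈ Subgroup.closure S := by rwa [hD] at hx
    clear hx
    induction hx' using Subgroup.closure_induction with
    | mem s hs => exact (h1 s hs y hy).eq
    | one => simp
    | mul u v hu' hv' hu hv => exact Commute.mul_left hu hv
    | inv u hu' hu => exact Commute.inv_left hu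
  -- D is commutative
  letI : CommGroup ↥D :=
    { (inferInstance : Group ↥D) with
      mul_comm := fun x y => Subtype.ext (hDcomm _ x.2 _ y.2) }
  -- the map from D to Zk
  let φD : ↥D →* Zk k := Φ.comp (Subgroup.inclusion hDC)
  -- elements d i
  have hdmem : ∀ i : Fin k, ((c i : G)) ^ n ∈ D := fun i =>
    Subgroup.subset_closure (Or.inl ⟨i, rfl⟩)
  have hφDd : ∀ i : Fin k, φD ⟨((c i : G)) ^ n, hdmem i⟩ = ofAdd (Pi.single i (1:ℤ)) ^ n := by
    intro i
    have h1 : Subgroup.inclusion hDC ⟨((c i : G)) ^ n, hdmem i⟩ = (c i) ^ n := by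
      ext; rfl
    show Φ (Subgroup.inclusion hDC ⟨((c i : G)) ^ n, hdmem i⟩) = _
    rw [h1, map_pow, hc i]
  -- kernel of φD is finite
  have hkerφD : Finite ↥φD.ker := by
    refine Finite.of_injective (fun x : ↥φD.ker => (⟨(x.1 : G), ?_⟩ : ↥f.ker)) ?_
    · exact hΦker _ x.2
    · intro x y hxy
      have h := congrArg (fun t : ↥f.ker => (t : G)) hxy
      exact Subtype.ext (Subtype.ext h)
  -- range of φD has finite index
  set W : Subgroup (Zk k) :=
      Subgroup.closure (Set.range fun i : Fin k => ofAdd (Pi.single i (1:ℤ)) ^ n) with hW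
  have hWfi : W.FiniteIndex := closure_pow_finiteIndex k n hn0
  have hWrange : W ≤ φD.range := by
    rw [hW, Subgroup.closure_le]
    rintro _ ⟨i, rfl⟩
    exact ⟨⟨((c i : G)) ^ n, hdmem i⟩, hφDd i⟩
  have hrangefi : φD.range.FiniteIndex := by
    refine ⟨fun h0 => ?_⟩
    have := Subgroup.index_dvd_of_le hWrange
    rw [h0] at this
    exact hWfi.index_ne_zero (Nat.eq_zero_of_zero_dvd this)
  obtain ⟨L', hL'fi, hL'iso⟩ := exists_free_subgroup_of_hom φD hkerφD hrangefi
  -- D has finite index in G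
  have hkerC : f.ker ⊓ C ≤ D := fun x hx => Subgroup.subset_closure (Or.inr hx)
  have hDfi : D.FiniteIndex := by
    have hsub : Subgroup.comap Φ W ≤ D.subgroupOf C := by
      intro x hx
      obtain ⟨d, hd⟩ := hWrange hx
      have h2 : Φ (x * (Subgroup.inclusion hDC d)⁻¹) = 1 := by
        rw [map_mul, map_inv]
        have hΦd : Φ (Subgroup.inclusion hDC d) = Φ x := hd
        rw [hΦd, mul_inv_cancel]
      have h3 : f (((x * (Subgroup.inclusion hDC d)⁻¹ : ↥C)) : G) = 1 := hΦker _ h2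
      have h4 : ((x : G) * ((d : ↥D) : G)⁻¹) ∈ f.ker ⊓ C := by
        constructor
        · exact h3
        · exact C.mul_mem x.2 (C.inv_mem (Subgroup.inclusion hDC d).2)
      have h5 : ((x : G) * ((d : ↥D) : G)⁻¹) ∈ D := hkerC h4
      have h6 : (x : G) ∈ D := by
        have := D.mul_mem h5 d.2
        simpa using this
      exact h6
    refine ⟨fun h0 => ?_⟩
    have h7 : (D.subgroupOf C).index ∣ (Subgroup.comap Φ W).index :=
      Subgroup.index_dvd_of_le hsub
    rw [Subgroup.index_comap_of_surjective _ hΦsurj] at h7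
    have h8 : (D.subgroupOf C).index ≠ 0 := by
      intro hz
      rw [hz] at h7
      exact hWfi.index_ne_zero (Nat.eq_zero_of_zero_dvd h7)
    have h9 := Subgroup.relIndex_mul_index hDC
    rw [h0] at h9
    rcases Nat.mul_eq_zero.mp h9 with h | h
    · exact h8 h
    · exact hCfi.index_ne_zero h
  exact flatten_subgroup hDfi L' hL'fi hL'iso

lemma discreteTopology_quotient_of_isOpen {A : Type*} [Group A] [TopologicalSpace A]
    [IsTopologicalGroup A] (N : Subgroup A) [N.Normal] (h : IsOpen (N : Set A)) :
    DiscreteTopology (A ⧸ N) := by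
  rw [discreteTopology_iff_isOpen_singleton_one]
  have himg : (QuotientGroup.mk '' (N : Set A) : Set (A ⧸ N)) = {1} := by
    ext x
    simp only [Set.mem_image, Set.mem_singleton_iff]
    constructor
    · rintro ⟨n, hn, rfl⟩
      exact (QuotientGroup.eq_one_iff n).mpr hn
    · rintro rfl
      exact ⟨1, N.one_mem, rfl⟩
  rw [← himg]
  exact QuotientGroup.isOpenMap_coe _ h

lemma finite_image_mk {A : Type*} [Group A] [TopologicalSpace A] [IsTopologicalGroup A]
    (M : Subgroup A) [M.Normal] (hMopen : IsOpen (M : Set A)) {s : Set A} (hs : IsCompact s) :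
    (QuotientGroup.mk '' s : Set (A ⧸ M)).Finite := by
  haveI : DiscreteTopology (A ⧸ M) := discreteTopology_quotient_of_isOpen M hMopen
  have hc : IsCompact (QuotientGroup.mk '' s : Set (A ⧸ M)) :=
    hs.image continuous_quotient_mk'
  exact hc.finite_of_discrete

end AuxiliaryRankLemmas

open Multiplicative in
/-- Well-definedness of the rank of an almost abelian group: there is a `k` such that for
every compact, open, normal subgroup `N` of `A`, the quotient `A/N` is discrete, finitely
generated and virtually abelian of rank `k`. -/
theorem rank_well_defined (A : Type*) [Group A] [TopologicalSpace A] [IsTopologicalGroup A]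
    (hA : AlmostAbelian A) :
    ∃ k : ℕ, ∀ (N : Subgroup A) (_ : N.Normal),
      IsCompact (N : Set A) → IsOpen (N : Set A) →
      DiscreteTopology (A ⧸ N) ∧ Group.FG (A ⧸ N) ∧ HasFreeAbelianRank (A ⧸ N) k := by
  classical
  obtain ⟨N₀, hN₀norm, hN₀open, hN₀cpt, _, hN₀fg, K₀, hK₀fi, hK₀comm⟩ := hA
  haveI := hN₀norm
  haveI := hK₀fi
  haveI := hN₀fg
  letI : CommGroup ↥K₀ :=
    { (inferInstance : Group ↥K₀) with
      mul_comm := fun x y => Subtype.ext (hK₀comm _ x.2 _ y.2) }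
  haveI : Group.FG ↥K₀ := Subgroup.fg_of_index_ne_zero _
  obtain ⟨k, L₀, hL₀fi, hL₀iso⟩ := exists_free_subgroup_of_fg ↥K₀
  have hrank₀ : ∃ L : Subgroup (A ⧸ N₀), L.FiniteIndex ∧ Nonempty (↥L ≃* Zk k) :=
    flatten_subgroup hK₀fi L₀ hL₀fi hL₀iso
  refine ⟨k, fun N hNnorm hNcpt hNopen => ?_⟩
  haveI := hNnorm
  set M : Subgroup A := N ⊓ N₀ with hM
  haveI : M.Normal := inferInstance
  have hMopen : IsOpen (M : Set A) := by
    rw [hM, Subgroup.coe_inf]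
    exact hNopen.inter hN₀open
  haveI hdiscM : DiscreteTopology (A ⧸ M) := discreteTopology_quotient_of_isOpen M hMopen
  haveI hdiscN : DiscreteTopology (A ⧸ N) := discreteTopology_quotient_of_isOpen N hNopen
  -- the two projections
  let π₁ : A ⧸ M →* A ⧸ N := QuotientGroup.map M N (MonoidHom.id A) (by
    rw [hM]; intro x hx; exact hx.1)
  let π₂ : A ⧸ M →* A ⧸ N₀ := QuotientGroup.map M N₀ (MonoidHom.id A) (by
    rw [hM]; intro x hx; exact hx.2)
  have hπ₁surj : Function.Surjective π₁ := by
    intro q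
    induction q using QuotientGroup.induction_on with
    | H a => exact ⟨QuotientGroup.mk a, QuotientGroup.map_mk _ _ _ _ a⟩
  have hπ₂surj : Function.Surjective π₂ := by
    intro q
    induction q using QuotientGroup.induction_on with
    | H a => exact ⟨QuotientGroup.mk a, QuotientGroup.map_mk _ _ _ _ a⟩
  have hπ₁ker : Finite ↥π₁.ker := by
    have hsub : (π₁.ker : Set (A ⧸ M)) ⊆ (QuotientGroup.mk '' (N : Set A)) := by
      intro x hx
      induction x using QuotientGroup.induction_on with
      | H a =>
        refine ⟨a, ?_, rfl⟩
        have h1 : π₁ (QuotientGroup.mk a) = 1 := hx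
        rw [QuotientGroup.map_mk] at h1
        exact (QuotientGroup.eq_one_iff _).mp h1
    exact ((finite_image_mk M hMopen hNcpt).subset hsub).to_subtype
  have hπ₂ker : Finite ↥π₂.ker := by
    have hsub : (π₂.ker : Set (A ⧸ M)) ⊆ (QuotientGroup.mk '' (N₀ : Set A)) := by
      intro x hx
      induction x using QuotientGroup.induction_on with
      | H a =>
        refine ⟨a, ?_, rfl⟩
        have h1 : π₂ (QuotientGroup.mk a) = 1 := hx
        rw [QuotientGroup.map_mk] at h1
        exact (QuotientGroup.eq_one_iff _).mp h1
    exact ((finite_image_mk M hMopen hN₀cpt).subset hsub).to_subtype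
  -- finite generation of A ⧸ M
  have hfgM : Group.FG (A ⧸ M) := by
    obtain ⟨T₀, hT₀top, hT₀fin⟩ := Group.fg_iff.mp hN₀fg
    set g : A ⧸ N₀ → A := Function.surjInv (QuotientGroup.mk'_surjective N₀) with hg
    set T : Set A := g '' T₀ with hT
    have hTA : Subgroup.closure ((N₀ : Set A) ∪ T) = ⊤ := by
      set X := Subgroup.closure ((N₀ : Set A) ∪ T) with hX
      have hker : N₀ ≤ X := le_trans (by
        intro x hx
        exact Subgroup.subset_closure (Or.inl hx)) (le_refl X)
      have hmapX : X.map (QuotientGroup.mk' N₀) = ⊤ := by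
        rw [eq_top_iff, ← hT₀top, Subgroup.closure_le]
        intro t ht
        refine ⟨g t, ?_, Function.surjInv_eq _ t⟩
        exact Subgroup.subset_closure (Or.inr ⟨t, ht, rfl⟩)
      have h2 := Subgroup.comap_map_eq (QuotientGroup.mk' N₀) X
      rw [hmapX, Subgroup.comap_top, QuotientGroup.ker_mk'] at h2
      have h3 : X ⊔ N₀ = X := sup_eq_left.mpr hker
      rw [h3] at h2
      exact h2.symm
    rw [Group.fg_iff]
    refine ⟨QuotientGroup.mk '' ((N₀ : Set A) ∪ T), ?_, ?_⟩
    · have h3 : Subgroup.closure ((QuotientGroup.mk' M) '' ((N₀ : Set A) ∪ T)) = ⊤ := by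
        rw [← MonoidHom.map_closure, hTA, Subgroup.map_top_of_surjective]
        exact QuotientGroup.mk'_surjective M
      exact h3
    · rw [Set.image_union]
      refine Set.Finite.union ?_ ((hT₀fin.image g).image _)
      exact finite_image_mk M hMopen hN₀cpt
  -- conclude
  obtain ⟨K₁, hK₁fi, ⟨ι₁⟩⟩ := hrank₀
  obtain ⟨K₂, hK₂fi, ⟨ι₂⟩⟩ := pull_rank hπ₂surj hπ₂ker K₁ hK₁fi ι₁
  have hrkN : ∃ L : Subgroup (A ⧸ N), L.FiniteIndex ∧ Nonempty (↥L ≃* Zk k) :=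
    push_rank hπ₁surj hπ₁ker K₂ hK₂fi ι₂
  haveI := hfgM
  have hfgN : Group.FG (A ⧸ N) := Group.fg_of_surjective hπ₁surj
  exact ⟨hdiscN, hfgN, hrkN⟩

end
end

section
/- Let P0, r0 > 0 and r ≥ 0. Then there exists M0 = M0(P0,r0,r) such that the following holds. Let X be a proper, geodesically complete, (P0,r0)-packed CAT(0)-space, let G < Isom(X) be closed, and let μ be a left-invariant Haar measure on G. Then μ(S̄_r(x)^p) ≤ M0^{p−1}·μ(S̄_r(x)) for every x ∈ X and every p ∈ ℕ, where S̄_r(x)^p denotes the set of products of p elements of S̄_r(x). -/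
open Metric Set Pointwise
open scoped ENNReal

noncomputable section

/-- A unit-speed geodesic from `x` to `y`, parametrized on `[0, dist x y]`. -/
def IsGeodesicSeg {X : Type*} [MetricSpace X] (c : ℝ → X) (x y : X) : Prop :=
  c 0 = x ∧ c (dist x y) = y ∧
    ∀ s ∈ Set.Icc (0 : ℝ) (dist x y), ∀ t ∈ Set.Icc (0 : ℝ) (dist x y),
      dist (c s) (c t) = |s - t|

/-- A geodesic metric space: any two points are joined by a geodesic. -/
def IsGeodesicSpace (X : Type*) [MetricSpace X] : Prop :=
  ∀ x y : X, ∃ c : ℝ → X, IsGeodesicSeg c x y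

/-- The comparison point at arclength parameter `s` on the Euclidean segment from `a` to `b`. -/
def cmpPoint (a b : EuclideanSpace ℝ (Fin 2)) (s : ℝ) : EuclideanSpace ℝ (Fin 2) :=
  a + (s / dist a b) • (b - a)

/-- A CAT(0)-space: a geodesic space in which every geodesic triangle is thinner than its
Euclidean comparison triangle. -/
def IsCAT0 (X : Type*) [MetricSpace X] : Prop :=
  IsGeodesicSpace X ∧
    ∀ (x y z : X) (c₁ c₂ : ℝ → X), IsGeodesicSeg c₁ x y → IsGeodesicSeg c₂ x z →
      ∀ x' y' z' : EuclideanSpace ℝ (Fin 2),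
        dist x' y' = dist x y → dist x' z' = dist x z → dist y' z' = dist y z →
          ∀ s ∈ Set.Icc (0 : ℝ) (dist x y), ∀ t ∈ Set.Icc (0 : ℝ) (dist x z),
            dist (c₁ s) (c₂ t) ≤ dist (cmpPoint x' y' s) (cmpPoint x' z' t)

/-- Geodesically complete: every geodesic segment extends to a (full) geodesic line. -/
def GeodesicallyComplete (X : Type*) [MetricSpace X] : Prop :=
  ∀ (a b : ℝ) (c : ℝ → X),
    (∀ s ∈ Set.Icc a b, ∀ t ∈ Set.Icc a b, dist (c s) (c t) = |s - t|) →
    ∃ l : ℝ → X, Isometry l ∧ ∀ s ∈ Set.Icc a b, l s = c s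

/-- `(P₀, r₀)`-packed: every `2r₀`-separated subset of a closed ball of radius `3r₀`
has at most `P₀` elements. -/
def IsPacked (P₀ r₀ : ℝ) (X : Type*) [MetricSpace X] : Prop :=
  ∀ (x : X) (s : Finset X), ↑s ⊆ Metric.closedBall x (3 * r₀) →
    (∀ y ∈ s, ∀ z ∈ s, y ≠ z → 2 * r₀ < dist y z) → (s.card : ℝ) ≤ P₀

/-- The compact-open topology on the isometry group of a metric space. -/
instance isomTopology (X : Type*) [MetricSpace X] : TopologicalSpace (X ≃ᵢ X) :=
  TopologicalSpace.induced
    (fun g : X ≃ᵢ X => (⟨(g : X → X), g.continuous⟩ : C(X, X))) inferInstance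

/-- `G` is `D`-cocompact: `G ⬝ B̄(x, D) = X` for every `x`. -/
def IsDCocompact {X : Type*} [MetricSpace X] (G : Subgroup (X ≃ᵢ X)) (D : ℝ) : Prop :=
  ∀ x y : X, ∃ g ∈ G, dist x (g y) ≤ D

/-- The quotient metric space `G \ X` has diameter at most `D`:
the infimum `inf_{g ∈ G} d(x, g y)` is `≤ D` for all `x, y`. -/
def QuotDiamLE {X : Type*} [MetricSpace X] (G : Subgroup (X ≃ᵢ X)) (D : ℝ) : Prop :=
  ∀ x y : X, ∀ ε > 0, ∃ g ∈ G, dist x (g y) < D + ε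

/-- `G` is cocompact: the quotient `G \ X` is compact; equivalently there is a compact set
whose `G`-translates cover `X`. -/
def IsCocompactAction {X : Type*} [MetricSpace X] (G : Subgroup (X ≃ᵢ X)) : Prop :=
  ∃ K : Set X, IsCompact K ∧ ∀ x : X, ∃ g ∈ G, (g : X ≃ᵢ X) x ∈ K

/-- A topological group is unimodular if it admits a left and right invariant Haar measure,
i.e. a Borel measure, positive on open sets and finite on compact sets, invariant under all
left and right translations. -/
def IsUnimodularGroup (G : Type*) [Group G] [TopologicalSpace G] : Prop :=
  ∃ μ : @MeasureTheory.Measure G (borel G),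
    (∀ K : Set G, IsCompact K → μ K ≠ ⊤) ∧
    (∀ U : Set G, IsOpen U → U.Nonempty → 0 < μ U) ∧
    (∀ (g : G) (A : Set G), μ ((fun h => g * h) '' A) = μ A) ∧
    (∀ (g : G) (A : Set G), μ ((fun h => h * g) '' A) = μ A)

/-- An isometry is elliptic if it has a fixed point (equivalently, the displacement infimum
is attained and equals `0`). -/
def IsEllipticIso {X : Type*} [MetricSpace X] (g : X ≃ᵢ X) : Prop :=
  ∃ x : X, g x = x

/-- Translation length of an isometry. -/
def translationLength {X : Type*} [MetricSpace X] (g : X ≃ᵢ X) : ℝ :=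
  ⨅ x : X, dist x (g x)

/-- An isometry is semisimple if its displacement infimum is attained
(it is then elliptic or hyperbolic). -/
def IsSemisimpleIso {X : Type*} [MetricSpace X] (g : X ≃ᵢ X) : Prop :=
  ∃ x : X, dist x (g x) = translationLength g

/-- The free systole of `G` at `x`: infimum of displacements at `x` of non-elliptic
elements of `G` (`⊤` if there are none). -/
def freeSystoleAt {X : Type*} [MetricSpace X] (G : Subgroup (X ≃ᵢ X)) (x : X) : ℝ≥0∞ :=
  ⨅ g ∈ {g : X ≃ᵢ X | g ∈ G ∧ ¬ IsEllipticIso g}, edist x (g x)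

/-- The free systole of `G`. -/
def freeSystole {X : Type*} [MetricSpace X] (G : Subgroup (X ≃ᵢ X)) : ℝ≥0∞ :=
  ⨅ x : X, freeSystoleAt G x

/-- The free diastole of `G`. -/
def freeDiastole {X : Type*} [MetricSpace X] (G : Subgroup (X ≃ᵢ X)) : ℝ≥0∞ :=
  ⨆ x : X, freeSystoleAt G x

/-- The open almost stabilizer `G_r(x) = ⟨S_r(x)⟩`. -/
def openAlmostStab {X : Type*} [MetricSpace X] (G : Subgroup (X ≃ᵢ X)) (x : X) (r : ℝ) :
    Subgroup (X ≃ᵢ X) :=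
  Subgroup.closure {g : X ≃ᵢ X | g ∈ G ∧ dist x (g x) < r}

/-- The closed almost stabilizer `Ḡ_r(x) = ⟨S̄_r(x)⟩`. -/
def closedAlmostStab {X : Type*} [MetricSpace X] (G : Subgroup (X ≃ᵢ X)) (x : X) (r : ℝ) :
    Subgroup (X ≃ᵢ X) :=
  Subgroup.closure {g : X ≃ᵢ X | g ∈ G ∧ dist x (g x) ≤ r}

end


section Aux

open Metric Set

lemma eucl_dist' (p q : EuclideanSpace ℝ (Fin 2)) :
    dist p q = Real.sqrt ((p 0 - q 0)^2 + (p 1 - q 1)^2) := by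
  rw [EuclideanSpace.dist_eq, Fin.sum_univ_two]
  simp [Real.dist_eq, sq_abs]

lemma exists_cmp_triangle' (a b c : ℝ) (ha : 0 ≤ a) (hb : 0 ≤ b)
    (h1 : c ≤ a + b) (h2 : a ≤ b + c) (h3 : b ≤ a + c) :
    ∃ A B C : EuclideanSpace ℝ (Fin 2), dist A B = a ∧ dist A C = b ∧ dist B C = c := by
  have hc : 0 ≤ c := by linarith [abs_nonneg (a-b), abs_sub_abs_le_abs_sub a b]
  rcases eq_or_lt_of_le ha with rfl | ha'
  · have hbc : b = c := le_antisymm (by linarith) (by linarith)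
    subst hbc
    refine ⟨!₂[0,0], !₂[0,0], !₂[b,0], ?_, ?_, ?_⟩
    · rw [eucl_dist']; simp
    · rw [eucl_dist']; simp; exact Real.sqrt_sq hb
    · rw [eucl_dist']; simp; exact Real.sqrt_sq hb
  · set u : ℝ := (a^2 + b^2 - c^2)/(2*a) with hu
    have hub : u^2 ≤ b^2 := by
      rw [div_pow, div_le_iff₀ (by positivity)]
      nlinarith [mul_nonneg (mul_nonneg (by linarith : (0:ℝ) ≤ c - a + b)
        (by linarith : (0:ℝ) ≤ c + a - b))
        (mul_nonneg (by linarith : (0:ℝ) ≤ a + b - c) (by linarith : (0:ℝ) ≤ a + b + c))]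
    set v : ℝ := Real.sqrt (b^2 - u^2) with hv
    have hv2 : v^2 = b^2 - u^2 := Real.sq_sqrt (by linarith)
    have hau : a * u = (a^2 + b^2 - c^2)/2 := by rw [hu]; field_simp
    refine ⟨!₂[0,0], !₂[a,0], !₂[u,v], ?_, ?_, ?_⟩
    · rw [eucl_dist']; simp; exact Real.sqrt_sq ha
    · rw [eucl_dist']; simp
      rw [show u^2 + v^2 = b^2 by rw [hv2]; ring]
      exact Real.sqrt_sq hb
    · rw [eucl_dist']; simp
      rw [show (a-u)^2 + v^2 = c^2 by rw [hv2]; linear_combination (-2:ℝ) * hau]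
      exact Real.sqrt_sq hc

/-- Existence of a maximal `δ`-separated subset of a finite set. -/
lemma exists_maximal_separated' {X : Type*} [MetricSpace X] (F : Finset X) (δ : ℝ)
    (hδ : 0 < δ) :
    ∃ T : Finset X, T ⊆ F ∧ (∀ a ∈ T, ∀ b ∈ T, a ≠ b → δ < dist a b) ∧
      ∀ f ∈ F, ∃ t ∈ T, dist t f ≤ δ := by
  classical
  set S := F.powerset.filter (fun T => ∀ a ∈ T, ∀ b ∈ T, a ≠ b → δ < dist a b) with hS
  have hne : S.Nonempty := ⟨∅, by simp [hS]⟩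
  obtain ⟨T, hTS, hmax⟩ := S.exists_max_image Finset.card hne
  rw [hS, Finset.mem_filter, Finset.mem_powerset] at hTS
  refine ⟨T, hTS.1, hTS.2, ?_⟩
  intro f hf
  by_contra hcon
  push_neg at hcon
  have hfT : f ∉ T := by
    intro hfT
    have := hcon f hfT
    linarith [dist_self f, hδ]
  have hins : insert f T ∈ S := by
    rw [hS, Finset.mem_filter, Finset.mem_powerset]
    constructor
    · exact Finset.insert_subset hf hTS.1
    · intro a ha b hb hab
      rcases Finset.mem_insert.1 ha with rfl | ha'
      · rcases Finset.mem_insert.1 hb with rfl | hb'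
        · exact absurd rfl hab
        · rw [dist_comm]; exact hcon b hb'
      · rcases Finset.mem_insert.1 hb with rfl | hb'
        · exact hcon a ha'
        · exact hTS.2 a ha' b hb' hab
  have := hmax _ hins
  rw [Finset.card_insert_of_notMem hfT] at this
  omega

/-- Part A: iterated packing bound for separated sets in large balls. -/
lemma packA' {X : Type*} [MetricSpace X] {P₀ ρ Q : ℝ} (hρ : 0 < ρ)
    (hgeo : IsGeodesicSpace X) (hpack : IsPacked P₀ ρ X) (hPQ : P₀ ≤ Q) (hQ1 : 1 ≤ Q) :
    ∀ (k : ℕ) (x : X) (s : Finset X), ↑s ⊆ Metric.closedBall x ((3 + k) * ρ) →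
      (∀ a ∈ s, ∀ b ∈ s, a ≠ b → 2 * ρ < dist a b) → (s.card : ℝ) ≤ Q ^ (k + 1) := by
  intro k
  induction k with
  | zero =>
    intro x s hball hsep
    have := hpack x s (by simpa using hball) hsep
    calc (s.card : ℝ) ≤ P₀ := this
      _ ≤ Q := hPQ
      _ = Q ^ (0 + 1) := by ring
  | succ k ih =>
    intro x s hball hsep
    classical
    -- choose geodesics from x and project inward by ρ
    have hproj : ∀ y : X, ∃ y' : X, dist x y' = max (dist x y - ρ) 0 ∧ dist y y' ≤ ρ := by
      intro y
      obtain ⟨c, hc0, hcd, hiso⟩ := hgeo x y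
      set d := dist x y with hd
      have hd0 : 0 ≤ d := dist_nonneg
      set m := max (d - ρ) 0 with hm
      have hm0 : 0 ≤ m := le_max_right _ _
      have hmd : m ≤ d := max_le (by linarith) hd0
      refine ⟨c m, ?_, ?_⟩
      · have := hiso 0 ⟨le_refl 0, hd0⟩ m ⟨hm0, hmd⟩
        rw [hc0] at this
        rw [this, abs_of_nonpos (by linarith)]
        ring_nf
      · have := hiso d ⟨hd0, le_refl d⟩ m ⟨hm0, hmd⟩
        rw [hcd] at this
        rw [this, abs_of_nonneg (by linarith)]
        have : d - ρ ≤ m := le_max_left _ _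
        linarith
    choose pr hpr1 hpr2 using hproj
    set F := s.image pr with hF
    obtain ⟨T, hTF, hTsep, hTmax⟩ := exists_maximal_separated' F (2 * ρ) (by linarith)
    have hTball : ↑T ⊆ Metric.closedBall x ((3 + (k:ℝ)) * ρ) := by
      intro t ht
      obtain ⟨y, hy, rfl⟩ := Finset.mem_image.1 (hTF ht)
      have hxy : dist x y ≤ (3 + ((k:ℝ) + 1)) * ρ := by
        have := hball hy
        rw [Metric.mem_closedBall] at this
        rw [dist_comm]
        push_cast at this ⊢
        linarith
      rw [Metric.mem_closedBall, dist_comm, hpr1]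
      apply max_le <;> nlinarith
    have hTcard : (T.card : ℝ) ≤ Q ^ (k + 1) := ih x T hTball hTsep
    -- assign each point of s to a nearby point of T
    have hch : ∀ y ∈ s, ∃ t ∈ T, dist t (pr y) ≤ 2 * ρ := by
      intro y hy
      exact hTmax (pr y) (Finset.mem_image_of_mem pr hy)
    set ch : X → X := fun y =>
      if h : ∃ t ∈ T, dist t (pr y) ≤ 2 * ρ then h.choose else y with hch_def
    have hch1 : ∀ y ∈ s, ch y ∈ T ∧ dist (ch y) (pr y) ≤ 2 * ρ := by
      intro y hy
      have h := hch y hy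
      simp only [hch_def, dif_pos h]
      exact ⟨h.choose_spec.1, h.choose_spec.2⟩
    have hsub : s ⊆ T.biUnion (fun t => s.filter (fun y => ch y = t)) := by
      intro y hy
      rw [Finset.mem_biUnion]
      exact ⟨ch y, (hch1 y hy).1, Finset.mem_filter.2 ⟨hy, rfl⟩⟩
    have hcard1 : s.card ≤ ∑ t ∈ T, (s.filter (fun y => ch y = t)).card :=
      le_trans (Finset.card_le_card hsub) (Finset.card_biUnion_le)
    have hfiber : ∀ t ∈ T, ((s.filter (fun y => ch y = t)).card : ℝ) ≤ Q := by
      intro t ht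
      refine le_trans (hpack t (s.filter (fun y => ch y = t)) ?_ ?_) hPQ
      · intro y hy
        rw [Finset.coe_filter, Set.mem_setOf_eq] at hy
        obtain ⟨hys, hcy⟩ := hy
        rw [Metric.mem_closedBall, dist_comm]
        calc dist t y ≤ dist t (pr y) + dist (pr y) y := dist_triangle _ _ _
          _ ≤ 2 * ρ + ρ := by
              have h2 := (hch1 y hys).2
              rw [hcy] at h2
              have h3 := hpr2 y
              rw [dist_comm] at h3
              linarith
          _ = 3 * ρ := by ring
      · intro a ha b hb hab
        rw [Finset.mem_filter] at ha hb
        exact hsep a ha.1 b hb.1 hab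
    have hQ0 : (0:ℝ) ≤ Q := by linarith
    calc (s.card : ℝ) ≤ ∑ t ∈ T, ((s.filter (fun y => ch y = t)).card : ℝ) := by
          exact_mod_cast hcard1
      _ ≤ ∑ _t ∈ T, Q := Finset.sum_le_sum hfiber
      _ = (T.card : ℝ) * Q := by rw [Finset.sum_const, nsmul_eq_mul]
      _ ≤ Q ^ (k + 1) * Q := mul_le_mul_of_nonneg_right hTcard hQ0
      _ = Q ^ (k + 1 + 1) := by ring

/-- Part B: packing propagates to smaller scales in geodesically complete CAT(0) spaces. -/
lemma packB' {X : Type*} [MetricSpace X] {P₀ r₀ : ℝ} (hr₀ : 0 < r₀)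
    (hgc : GeodesicallyComplete X) (hcat : IsCAT0 X) (hpack : IsPacked P₀ r₀ X)
    {ρ : ℝ} (hρ : 0 < ρ) (hρr : ρ ≤ r₀) : IsPacked P₀ ρ X := by
  intro x s hball hsep
  classical
  set lam := r₀ / ρ with hlam
  have hlam1 : 1 ≤ lam := (one_le_div hρ).2 hρr
  have hlam0 : 0 < lam := by linarith
  -- extend geodesics from x through each point to rays
  have hext : ∀ y : X, ∃ l : ℝ → X, Isometry l ∧ l 0 = x ∧ l (dist x y) = y := by
    intro y
    obtain ⟨c, hc0, hcd, hiso⟩ := hcat.1 x y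
    obtain ⟨l, hl, hagree⟩ := hgc 0 (dist x y) c hiso
    refine ⟨l, hl, ?_, ?_⟩
    · rw [hagree 0 ⟨le_refl 0, dist_nonneg⟩, hc0]
    · rw [hagree (dist x y) ⟨dist_nonneg, le_refl _⟩, hcd]
  choose l hliso hl0 hld using hext
  set z : X → X := fun y => l y (lam * dist x y) with hz
  have hzd : ∀ y : X, dist x (z y) = lam * dist x y := by
    intro y
    have h := (hliso y).dist_eq 0 (lam * dist x y)
    rw [hl0 y] at h
    show dist x (l y (lam * dist x y)) = lam * dist x y
    rw [h, Real.dist_eq, abs_sub_comm, sub_zero,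
      abs_of_nonneg (mul_nonneg hlam0.le dist_nonneg)]
  -- the key CAT(0) expansion estimate
  have hkey : ∀ y y' : X, lam * dist y y' ≤ dist (z y) (z y') := by
    intro y y'
    rcases eq_or_lt_of_le (dist_nonneg : 0 ≤ dist x y) with h0 | hy_pos
    · have hyx : y = x := by rw [dist_comm] at h0; exact dist_eq_zero.1 h0.symm
      have hzy : z y = x := by
        rw [hz]; simp only; rw [hyx, dist_self, mul_zero, hl0]
      rw [hzy, hyx, hzd y']
    rcases eq_or_lt_of_le (dist_nonneg : 0 ≤ dist x y') with h0' | hy'_pos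
    · have hyx : y' = x := by rw [dist_comm] at h0'; exact dist_eq_zero.1 h0'.symm
      have hzy : z y' = x := by
        rw [hz]; simp only; rw [hyx, dist_self, mul_zero, hl0]
      rw [hzy, hyx, dist_comm (z y) x, hzd y, dist_comm y x]
    -- both distances positive: use the CAT(0) comparison
    set dy := dist x y with hdy
    set dy' := dist x y' with hdy'
    have hseg1 : IsGeodesicSeg (l y) x (z y) := by
      refine ⟨hl0 y, ?_, ?_⟩
      · rw [hzd y]
      · intro a _ b _
        rw [(hliso y).dist_eq, Real.dist_eq]
    have hseg2 : IsGeodesicSeg (l y') x (z y') := by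
      refine ⟨hl0 y', ?_, ?_⟩
      · rw [hzd y']
      · intro a _ b _
        rw [(hliso y').dist_eq, Real.dist_eq]
    obtain ⟨A, B, C, hAB, hAC, hBC⟩ := exists_cmp_triangle' (dist x (z y)) (dist x (z y'))
      (dist (z y) (z y')) dist_nonneg dist_nonneg (dist_triangle_left _ _ _)
      (by rw [dist_comm (z y) (z y')]; exact dist_triangle x (z y') (z y))
      (dist_triangle x (z y) (z y'))
    have hcmp := hcat.2 x (z y) (z y') (l y) (l y') hseg1 hseg2 A B C hAB hAC hBC
      dy ⟨dist_nonneg, by rw [hzd y]; nlinarith⟩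
      dy' ⟨dist_nonneg, by rw [hzd y']; nlinarith⟩
    rw [hld y, hld y'] at hcmp
    have hfrac1 : dy / dist A B = lam⁻¹ := by
      rw [hAB, hzd y, ← hdy]
      field_simp
    have hfrac2 : dy' / dist A C = lam⁻¹ := by
      rw [hAC, hzd y', ← hdy']
      field_simp
    have hstep : dist (A + (dy / dist A B) • (B - A)) (A + (dy' / dist A C) • (C - A))
        = lam⁻¹ * dist (z y) (z y') := by
      rw [hfrac1, hfrac2, dist_add_left, dist_eq_norm,
        show lam⁻¹ • (B - A) - lam⁻¹ • (C - A) = lam⁻¹ • (B - C) by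
          rw [← smul_sub]; congr 1; abel,
        norm_smul, Real.norm_eq_abs, abs_of_pos (by positivity), ← dist_eq_norm, hBC]
    simp only [cmpPoint] at hcmp
    rw [hstep] at hcmp
    calc lam * dist y y' ≤ lam * (lam⁻¹ * dist (z y) (z y')) := by
          apply mul_le_mul_of_nonneg_left hcmp (le_of_lt hlam0)
      _ = dist (z y) (z y') := by field_simp
  -- now transport the separated set to scale r₀
  have hzinj : Set.InjOn z ↑s := by
    intro a ha b hb hab
    by_contra hne
    have := hkey a b
    have h1 : 2 * ρ < dist a b := hsep a ha b hb hne
    have h2 : lam * (2 * ρ) ≤ dist (z a) (z b) := by nlinarith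
    have h3 : lam * (2 * ρ) = 2 * r₀ := by rw [hlam]; field_simp
    rw [hab, dist_self] at h2
    nlinarith
  have hcard : (s.image z).card = s.card := Finset.card_image_of_injOn hzinj
  have := hpack x (s.image z) ?_ ?_
  · rw [hcard] at this; exact this
  · intro w hw
    obtain ⟨y, hy, rfl⟩ := Finset.mem_image.1 (by exact_mod_cast hw)
    rw [Metric.mem_closedBall, dist_comm] at *
    rw [hzd y]
    have hxy : dist x y ≤ 3 * ρ := by
      have := hball hy
      rwa [Metric.mem_closedBall, dist_comm] at this
    calc lam * dist x y ≤ lam * (3 * ρ) := by nlinarith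
      _ = 3 * r₀ := by rw [hlam]; field_simp
  · intro a ha b hb hab
    obtain ⟨ya, hya, rfl⟩ := Finset.mem_image.1 ha
    obtain ⟨yb, hyb, rfl⟩ := Finset.mem_image.1 hb
    have hyab : ya ≠ yb := fun h => hab (by rw [h])
    have h1 : 2 * ρ < dist ya yb := hsep ya hya yb hyb hyab
    have h2 := hkey ya yb
    have h3 : lam * (2 * ρ) = 2 * r₀ := by rw [hlam]; field_simp
    nlinarith

end Aux

open Pointwise MeasureTheory

/-- Doubling-type estimate for the Haar measure of powers of the almost-stabilizing sets
`S̄_r(x)` in a closed group of isometries of a proper, geodesically complete, packed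
CAT(0)-space. -/
theorem haar_measure_of_powers (P₀ r₀ r : ℝ) (hP₀ : 0 < P₀) (hr₀ : 0 < r₀) (hr : 0 ≤ r) :
    ∃ M₀ : ℝ, 0 < M₀ ∧
      ∀ (X : Type*) [MetricSpace X], ProperSpace X → GeodesicallyComplete X →
        IsCAT0 X → IsPacked P₀ r₀ X →
        ∀ G : Subgroup (X ≃ᵢ X), IsClosed (G : Set (X ≃ᵢ X)) →
          ∀ μ : @MeasureTheory.Measure ↥G (borel ↥G),
            (∀ K : Set ↥G, IsCompact K → μ K ≠ ⊤) →
            (∀ U : Set ↥G, IsOpen U → U.Nonempty → 0 < μ U) →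
            (∀ (g : ↥G) (A : Set ↥G), μ ((fun h => g * h) '' A) = μ A) →
            ∀ (x : X) (p : ℕ),
              μ ({g : ↥G | dist x ((g : X ≃ᵢ X) x) ≤ r} ^ p) ≤
                ENNReal.ofReal (M₀ ^ (p - 1)) *
                  μ {g : ↥G | dist x ((g : X ≃ᵢ X) x) ≤ r} := by
  classical
  set ρ : ℝ := min (r/2) r₀ with hρdef
  set Q : ℝ := max P₀ 1 with hQdef
  have hQ1 : 1 ≤ Q := le_max_right _ _
  have hPQ : P₀ ≤ Q := le_max_left _ _
  have hQ0 : 0 < Q := lt_of_lt_of_le one_pos hQ1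
  set K : ℕ := ⌈r/ρ⌉₊ with hKdef
  refine ⟨Q ^ (2*K+1), pow_pos hQ0 _, ?_⟩
  intro X _ hproper hgc hcat hpack G hGclosed μ hfin hopenpos hleft x p
  letI : MeasurableSpace ↥G := borel ↥G
  set S : Set ↥G := {g : ↥G | dist x ((g : X ≃ᵢ X) x) ≤ r} with hSdef
  have hone : (1 : ↥G) ∈ S := by
    have : ((1 : ↥G) : X ≃ᵢ X) x = x := rfl
    simp only [hSdef, Set.mem_setOf_eq, this, dist_self]
    exact hr
  have happly : ∀ a b : ↥G, ((↑(a*b) : X ≃ᵢ X)) x = (↑a : X ≃ᵢ X) ((↑b : X ≃ᵢ X) x) :=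
    fun a b => rfl
  have horb : ∀ (q : ℕ), ∀ g ∈ S ^ q, dist x ((g : X ≃ᵢ X) x) ≤ q * r := by
    intro q
    induction q with
    | zero =>
      intro g hg
      rw [pow_zero, Set.mem_one] at hg
      subst hg
      have : ((1 : ↥G) : X ≃ᵢ X) x = x := rfl
      simp [this]
    | succ q ih =>
      intro g hg
      rw [pow_succ] at hg
      obtain ⟨a, ha, b, hb, rfl⟩ := Set.mem_mul.1 hg
      have hiso : dist ((a : X ≃ᵢ X) x) ((↑(a*b) : X ≃ᵢ X) x) = dist x ((b : X ≃ᵢ X) x) := by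
        rw [happly a b]
        exact (a : X ≃ᵢ X).dist_eq x _
      calc dist x ((↑(a*b) : X ≃ᵢ X) x)
          ≤ dist x ((a : X ≃ᵢ X) x) + dist ((a : X ≃ᵢ X) x) ((↑(a*b) : X ≃ᵢ X) x) :=
            dist_triangle _ _ _
        _ ≤ q * r + r := by
            rw [hiso]
            exact add_le_add (ih a ha) hb
        _ = (q + 1 : ℕ) * r := by push_cast; ring
  rcases p with _ | _ | n
  · -- p = 0
    have hsub : S ^ 0 ⊆ S := by
      intro g hg
      rw [pow_zero, Set.mem_one] at hg
      subst hg
      exact hone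
    have h0 : (0:ℕ) - 1 = 0 := rfl
    rw [h0, pow_zero (Q ^ (2*K+1)), ENNReal.ofReal_one, one_mul]
    exact measure_mono hsub
  · -- p = 1
    rw [pow_one]
    have h0 : (1:ℕ) - 1 = 0 := rfl
    rw [h0, pow_zero (Q ^ (2*K+1)), ENNReal.ofReal_one, one_mul]
  · -- p = n + 2
    have hM1 : ∀ m : ℕ, (1:ℝ) ≤ Q ^ m := fun m => by
      calc (1:ℝ) = 1 ^ m := (one_pow m).symm
        _ ≤ Q ^ m := pow_le_pow_left₀ zero_le_one hQ1 m
    by_cases hr0 : r = 0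
    · -- r = 0 : S is multiplicatively closed
      subst hr0
      have hSS : ∀ q : ℕ, S ^ (q+1) ⊆ S := by
        intro q
        induction q with
        | zero => rw [pow_one]
        | succ q ih =>
          rw [pow_succ]
          intro g hg
          obtain ⟨a, ha, b, hb, rfl⟩ := Set.mem_mul.1 hg
          have ha' : dist x ((a : X ≃ᵢ X) x) ≤ 0 := ih ha
          have hb' : dist x ((b : X ≃ᵢ X) x) ≤ 0 := hb
          have hiso : dist ((a : X ≃ᵢ X) x) ((↑(a*b) : X ≃ᵢ X) x) = dist x ((b : X ≃ᵢ X) x) := by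
            rw [happly a b]
            exact (a : X ≃ᵢ X).dist_eq x _
          show dist x ((↑(a*b) : X ≃ᵢ X) x) ≤ 0
          calc dist x ((↑(a*b) : X ≃ᵢ X) x)
              ≤ dist x ((a : X ≃ᵢ X) x) + dist ((a : X ≃ᵢ X) x) ((↑(a*b) : X ≃ᵢ X) x) :=
                dist_triangle _ _ _
            _ ≤ 0 := by rw [hiso]; linarith
      calc μ (S ^ (n+2)) ≤ μ S := measure_mono (hSS (n+1))
        _ ≤ ENNReal.ofReal ((Q^(2*K+1)) ^ (n + 2 - 1)) * μ S := by
            apply le_mul_of_one_le_left zero_le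
            rw [ENNReal.one_le_ofReal, ← pow_mul]
            exact hM1 _
    · -- r > 0
      have hr' : 0 < r := lt_of_le_of_ne hr (Ne.symm hr0)
      have hρ0 : 0 < ρ := lt_min (by linarith) hr₀
      have hρr₀ : ρ ≤ r₀ := min_le_right _ _
      have h2ρ : 2 * ρ ≤ r := by
        have := min_le_left (r/2) r₀
        rw [← hρdef] at this
        linarith
      have hKρ : r ≤ K * ρ := by
        have h1 : r/ρ ≤ (K:ℝ) := Nat.le_ceil (r/ρ)
        rw [div_le_iff₀ hρ0] at h1
        linarith
      have hpackρ : IsPacked P₀ ρ X := packB' hr₀ hgc hcat hpack hρ0 hρr₀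
      have hbound : ∀ T : Finset ↥G, (∀ g ∈ T, g ∈ S ^ (n+2)) →
          (∀ a ∈ T, ∀ b ∈ T, a ≠ b → r < dist ((a : X ≃ᵢ X) x) ((b : X ≃ᵢ X) x)) →
          (T.card : ℝ) ≤ Q ^ ((n+2)*K + 1) := by
        intro T hTsub hTsep
        have hinj : Set.InjOn (fun g : ↥G => (g : X ≃ᵢ X) x) ↑T := by
          intro a ha b hb hab
          by_contra hne
          have h1 := hTsep a ha b hb hne
          simp only at hab
          rw [hab, dist_self] at h1
          linarith
        have hcard : (T.image (fun g : ↥G => (g : X ≃ᵢ X) x)).card = T.card :=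
          Finset.card_image_of_injOn hinj
        have hball : ↑(T.image (fun g : ↥G => (g : X ≃ᵢ X) x)) ⊆
            Metric.closedBall x ((3 + ((n+2)*K : ℕ)) * ρ) := by
          intro w hw
          obtain ⟨g, hg, rfl⟩ := Finset.mem_image.1 (by exact_mod_cast hw)
          rw [Metric.mem_closedBall, dist_comm]
          have h1 := horb (n+2) g (hTsub g hg)
          have h2 : ((n+2 : ℕ):ℝ) * r ≤ ((n+2 : ℕ):ℝ) * ((K:ℝ) * ρ) := by
            apply mul_le_mul_of_nonneg_left hKρ (by positivity)
          push_cast at h1 h2 ⊢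
          nlinarith [hρ0]
        have hsep' : ∀ a ∈ T.image (fun g : ↥G => (g : X ≃ᵢ X) x),
            ∀ b ∈ T.image (fun g : ↥G => (g : X ≃ᵢ X) x), a ≠ b → 2 * ρ < dist a b := by
          intro a ha b hb hab
          obtain ⟨g, hg, rfl⟩ := Finset.mem_image.1 ha
          obtain ⟨g', hg', rfl⟩ := Finset.mem_image.1 hb
          have hgg : g ≠ g' := fun h => hab (by rw [h])
          have := hTsep g hg g' hg' hgg
          linarith
        have := packA' hρ0 hcat.1 hpackρ hPQ hQ1 ((n+2)*K) x
          (T.image (fun g : ↥G => (g : X ≃ᵢ X) x)) hball hsep'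
        rw [hcard] at this
        exact this
      -- a maximal r-separated subset of S^(n+2)
      set N₀ : ℕ := ⌈Q ^ ((n+2)*K+1)⌉₊ with hN₀
      have hboundN : ∀ T : Finset ↥G, (∀ g ∈ T, g ∈ S ^ (n+2)) →
          (∀ a ∈ T, ∀ b ∈ T, a ≠ b → r < dist ((a : X ≃ᵢ X) x) ((b : X ≃ᵢ X) x)) →
          T.card ≤ N₀ := by
        intro T h1 h2
        have := (hbound T h1 h2).trans (Nat.le_ceil _)
        exact_mod_cast this
      set C : Set ℕ := {m | ∃ T : Finset ↥G, (∀ g ∈ T, g ∈ S ^ (n+2)) ∧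
        (∀ a ∈ T, ∀ b ∈ T, a ≠ b → r < dist ((a : X ≃ᵢ X) x) ((b : X ≃ᵢ X) x)) ∧
        T.card = m} with hC
      have hC0 : (0:ℕ) ∈ C := ⟨∅, by simp, by simp, rfl⟩
      have hCbdd : BddAbove C := by
        refine ⟨N₀, ?_⟩
        rintro m ⟨T, h1, h2, rfl⟩
        exact hboundN T h1 h2
      obtain ⟨T, hT1, hT2, hT3⟩ := Nat.sSup_mem ⟨0, hC0⟩ hCbdd
      have hTmax : ∀ g ∈ S ^ (n+2), ∃ t ∈ T, dist ((t : X ≃ᵢ X) x) ((g : X ≃ᵢ X) x) ≤ r := by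
        intro g hg
        by_contra hcon
        push_neg at hcon
        have hgT : g ∉ T := by
          intro h
          have := hcon g h
          rw [dist_self] at this
          linarith
        have hmem : T.card + 1 ∈ C := by
          refine ⟨insert g T, ?_, ?_, ?_⟩
          · intro h hh
            rcases Finset.mem_insert.1 hh with rfl | hh'
            · exact hg
            · exact hT1 h hh'
          · intro a ha b hb hab
            rcases Finset.mem_insert.1 ha with rfl | ha'
            · rcases Finset.mem_insert.1 hb with rfl | hb'
              · exact absurd rfl hab
              · rw [dist_comm]; exact hcon b hb'
            · rcases Finset.mem_insert.1 hb with rfl | hb'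
              · exact hcon a ha'
              · exact hT2 a ha' b hb' hab
          · exact Finset.card_insert_of_notMem hgT
        have := le_csSup hCbdd hmem
        omega
      have hcover : S ^ (n+2) ⊆ ⋃ t ∈ T, (fun h => t * h) '' S := by
        intro g hg
        obtain ⟨t, ht, htg⟩ := hTmax g hg
        refine Set.mem_iUnion₂.2 ⟨t, ht, ⟨t⁻¹ * g, ?_, by simp⟩⟩
        show dist x ((↑(t⁻¹*g) : X ≃ᵢ X) x) ≤ r
        have h1 : (↑(t⁻¹*g) : X ≃ᵢ X) x = ((t : X ≃ᵢ X))⁻¹ ((g : X ≃ᵢ X) x) := rfl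
        have h2 : dist x (((t : X ≃ᵢ X))⁻¹ ((g : X ≃ᵢ X) x))
            = dist ((t : X ≃ᵢ X) x) ((g : X ≃ᵢ X) x) := by
          have h3 := (t : X ≃ᵢ X).dist_eq x (((t : X ≃ᵢ X))⁻¹ ((g : X ≃ᵢ X) x))
          rw [IsometryEquiv.apply_inv_self] at h3
          exact h3.symm
        rw [h1, h2]
        exact htg
      calc μ (S ^ (n+2)) ≤ μ (⋃ t ∈ T, (fun h => t * h) '' S) := measure_mono hcover
        _ ≤ ∑ t ∈ T, μ ((fun h => t * h) '' S) := measure_biUnion_finset_le T _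
        _ = ∑ _t ∈ T, μ S := Finset.sum_congr rfl fun t _ => hleft t S
        _ = (T.card : ℝ≥0∞) * μ S := by rw [Finset.sum_const, nsmul_eq_mul]
        _ ≤ ENNReal.ofReal ((Q^(2*K+1)) ^ (n + 2 - 1)) * μ S := by
            apply mul_le_mul_left
            rw [← ENNReal.ofReal_natCast]
            apply ENNReal.ofReal_le_ofReal
            calc (T.card : ℝ) ≤ Q ^ ((n+2)*K + 1) := hbound T hT1 hT2
              _ ≤ Q ^ ((2*K+1) * (n+1)) := by
                  apply pow_le_pow_right₀ hQ1
                  have hq : (2*K+1)*(n+1) = ((n+2)*K+1) + (n*K + n) := by ring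
                  rw [hq]
                  exact Nat.le_add_right _ _
              _ = (Q^(2*K+1)) ^ (n + 2 - 1) := by
                  rw [show n + 2 - 1 = n + 1 from rfl, ← pow_mul]
end
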